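/- arXiv:1609.05356 — 5 statements merged into one kernel-verified Lean document; each statement's English description precedes it below -/
import Mathlib

section
/- Let 𝕏 be a perfect compact metric space, f:𝕏→𝕏 a Borel measurable map, and μ an f-invariant finite Borel measure on 𝕏. Then η_x is a probability measure, i.e. η_x(𝕏)=1, for μ-almost every x∈𝕏. -/
open MeasureTheory Filter Set Topology
open scoped ENNReal

/-- The premeasure `τ_x(A) = limsup_n (1/n) ∑_{j<n} 1_A(f^j x)`. -/
noncomputable def tauOrbit {X : Type*} (f : X → X) (x : X) (A : Set X) : ℝ≥0∞ :=
  Filter.atTop.limsup fun n : ℕ =>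
    (∑ j ∈ Finset.range n, A.indicator (fun _ => (1 : ℝ≥0∞)) (f^[j] x)) / (n : ℝ≥0∞)

/-- `ν_r(Y)`: infimum of `∑_i τ_x(I_i)` over countable covers of `Y` by open sets of
diameter at most `r`. -/
noncomputable def nuAux {X : Type*} [MetricSpace X] (f : X → X) (x : X) (r : ℝ)
    (Y : Set X) : ℝ≥0∞ :=
  ⨅ (I : ℕ → Set X) (_ : Y ⊆ ⋃ n, I n) (_ : ∀ n, IsOpen (I n))
    (_ : ∀ n, EMetric.diam (I n) ≤ ENNReal.ofReal r), ∑' n, tauOrbit f x (I n)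

/-- `ν(Y) = sup_{r>0} ν_r(Y)`, the Carathéodory Method II construction from `τ_x`. -/
noncomputable def nuFun {X : Type*} [MetricSpace X] (f : X → X) (x : X) (Y : Set X) : ℝ≥0∞ :=
  ⨆ (r : ℝ) (_ : 0 < r), nuAux f x r Y


noncomputable def birkS {X : Type*} (f : X → X) (A : Set X) (n : ℕ) (x : X) : ℝ≥0∞ :=
  ∑ j ∈ Finset.range n, A.indicator (fun _ => (1 : ℝ≥0∞)) (f^[j] x)

lemma birkS_add {X : Type*} (f : X → X) (A : Set X) (a b : ℕ) (x : X) :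
    birkS f A (a + b) x = birkS f A a x + birkS f A b (f^[a] x) := by
  unfold birkS
  rw [Finset.sum_range_add]
  congr 1
  refine Finset.sum_congr rfl fun j _ => ?_
  rw [← Function.iterate_add_apply]
  ring_nf

lemma birkS_le {X : Type*} (f : X → X) (A : Set X) (n : ℕ) (x : X) :
    birkS f A n x ≤ n := by
  calc birkS f A n x ≤ ∑ _j ∈ Finset.range n, (1 : ℝ≥0∞) :=
        Finset.sum_le_sum fun j _ => Set.indicator_le_self' (fun _ _ => zero_le_one) _
    _ = n := by simp

lemma avg_le_one {X : Type*} (f : X → X) (A : Set X) (n : ℕ) (x : X) :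
    birkS f A n x / n ≤ 1 := by
  rcases Nat.eq_zero_or_pos n with h | h
  · simp [h, birkS]
  · exact ENNReal.div_le_of_le_mul (by simpa using birkS_le f A n x)

lemma tauOrbit_eq {X : Type*} (f : X → X) (x : X) (A : Set X) :
    tauOrbit f x A = Filter.atTop.limsup fun n : ℕ => birkS f A n x / n := rfl

lemma tau_le_one {X : Type*} (f : X → X) (x : X) (A : Set X) :
    tauOrbit f x A ≤ 1 := by
  rw [tauOrbit_eq]
  exact limsup_le_of_le (by isBoundedDefault) (Eventually.of_forall fun n => avg_le_one f A n x)
lemma limsup_add_le' (u v : ℕ → ℝ≥0∞) :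
    Filter.atTop.limsup (fun n => u n + v n) ≤ Filter.atTop.limsup u + Filter.atTop.limsup v := by
  rw [limsup_eq_iInf_iSup_of_nat, limsup_eq_iInf_iSup_of_nat, limsup_eq_iInf_iSup_of_nat]
  set S : ℕ → ℝ≥0∞ := fun n => ⨆ i ≥ n, u i with hS
  set T : ℕ → ℝ≥0∞ := fun n => ⨆ i ≥ n, v i with hT
  have hSanti : Antitone S := fun n m hnm => biSup_mono fun i hi => hnm.trans hi
  have hTanti : Antitone T := fun n m hnm => biSup_mono fun i hi => hnm.trans hi
  have h1 : (⨅ n, ⨆ i ≥ n, (u i + v i)) ≤ ⨅ n, (S n + T n) := by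
    refine le_iInf fun n => iInf_le_of_le n (iSup₂_le fun i hi => ?_)
    exact add_le_add (le_iSup₂ (f := fun i _ => u i) i hi) (le_iSup₂ (f := fun i _ => v i) i hi)
  refine h1.trans ?_
  have h2 : (⨅ n, (S n + T n)) ≤ ⨅ n, ⨅ m, (S n + T m) := by
    refine le_iInf fun n => le_iInf fun m => iInf_le_of_le (max n m) ?_
    exact add_le_add (hSanti (le_max_left n m)) (hTanti (le_max_right n m))
  refine h2.trans (le_of_eq ?_)
  rw [ENNReal.iInf_add]
  exact iInf_congr fun n => (ENNReal.add_iInf).symm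

lemma div_succ_aux (S : ℝ≥0∞) (n : ℕ) (hn : n ≠ 0) (hS : S ≤ (n:ℝ≥0∞) + 1) :
    S / n ≤ S / ((n:ℝ≥0∞) + 1) + 1 / n := by
  have hn0 : ((n:ℝ≥0∞)) ≠ 0 := by exact_mod_cast hn
  have hnt : ((n:ℝ≥0∞)) ≠ ∞ := by simp
  have hn10 : ((n:ℝ≥0∞) + 1) ≠ 0 := by simp
  have hn1t : ((n:ℝ≥0∞) + 1) ≠ ∞ := by simp
  have key : S ≤ S * n / (n + 1) + 1 := by
    have e1 : S * (n:ℝ≥0∞) / (n + 1) + S / (n + 1) = S := by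
      rw [← ENNReal.add_div]
      have : S * (n:ℝ≥0∞) + S = S * ((n:ℝ≥0∞) + 1) := by ring
      rw [this, mul_div_assoc, ENNReal.div_self hn10 hn1t, mul_one]
    calc S = S * (n:ℝ≥0∞) / (n + 1) + S / (n + 1) := e1.symm
      _ ≤ S * n / (n + 1) + 1 := by
          gcongr
          exact ENNReal.div_le_of_le_mul (by simpa using hS)
  calc S / n ≤ (S * n / (n + 1) + 1) / n := ENNReal.div_le_div_right key _
    _ = (S * n / (n + 1)) / n + 1 / n := ENNReal.add_div
    _ = S / ((n:ℝ≥0∞) + 1) + 1 / n := by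
        congr 1
        have hinv : (n:ℝ≥0∞) * (n:ℝ≥0∞)⁻¹ = 1 := ENNReal.mul_inv_cancel hn0 hnt
        calc S * (n:ℝ≥0∞) / (n + 1) / n
            = S * ((n:ℝ≥0∞) + 1)⁻¹ * ((n:ℝ≥0∞) * (n:ℝ≥0∞)⁻¹) := by
              rw [div_eq_mul_inv, div_eq_mul_inv]; ring
          _ = S / ((n:ℝ≥0∞) + 1) := by rw [hinv, mul_one, div_eq_mul_inv]

lemma tau_comp {X : Type*} (f : X → X) (x : X) (A : Set X) :
    tauOrbit f (f x) A = tauOrbit f x A := by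
  have key : ∀ n : ℕ, birkS f A (n + 1) x
      = A.indicator (fun _ => (1:ℝ≥0∞)) x + birkS f A n (f x) := by
    intro n
    have := birkS_add f A 1 n x
    simpa [birkS, add_comm] using this
  have hshift : Filter.atTop.limsup (fun n : ℕ => birkS f A (n+1) x / ((n:ℝ≥0∞)+1))
      = Filter.atTop.limsup (fun n : ℕ => birkS f A n x / n) := by
    rw [show (fun n : ℕ => birkS f A (n+1) x / ((n:ℝ≥0∞)+1))
        = fun n : ℕ => birkS f A (n+1) x / ((n+1 : ℕ):ℝ≥0∞) by push_cast; rfl]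
    exact Filter.limsup_nat_add (fun n => birkS f A n x / n) 1
  have hvanish : Filter.atTop.limsup (fun n : ℕ => (1:ℝ≥0∞)/n) = 0 := by
    refine Tendsto.limsup_eq ?_
    simpa [one_div] using ENNReal.tendsto_inv_nat_nhds_zero
  have hvanish' : Filter.atTop.limsup (fun n : ℕ => (1:ℝ≥0∞)/((n:ℝ≥0∞)+1)) = 0 := by
    refine Tendsto.limsup_eq ?_
    have : Tendsto (fun n : ℕ => ((n:ℝ≥0∞)+1)⁻¹) atTop (𝓝 0) := by
      have h := ENNReal.tendsto_inv_nat_nhds_zero.comp (tendsto_add_atTop_nat 1)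
      have he : ((fun n : ℕ => ((n:ℝ≥0∞))⁻¹) ∘ fun a => a + 1) = fun n : ℕ => ((n:ℝ≥0∞)+1)⁻¹ := by
        funext n; simp [Function.comp, Nat.cast_add]
      rwa [he] at h
    simpa [one_div] using this
  apply le_antisymm
  · rw [tauOrbit_eq, tauOrbit_eq]
    calc Filter.atTop.limsup (fun n : ℕ => birkS f A n (f x) / n)
        ≤ Filter.atTop.limsup (fun n : ℕ => birkS f A (n+1) x / ((n:ℝ≥0∞)+1) + 1/n) := by
          refine limsup_le_limsup (Eventually.of_forall fun n => ?_)
          rcases Nat.eq_zero_or_pos n with h | h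
          · simp [h]
          have h1 : birkS f A n (f x) ≤ birkS f A (n+1) x := by
            rw [key n]; exact le_add_self
          calc birkS f A n (f x) / n ≤ birkS f A (n+1) x / n :=
                ENNReal.div_le_div_right h1 _
            _ ≤ birkS f A (n+1) x / ((n:ℝ≥0∞)+1) + 1/n := by
                refine div_succ_aux _ n h.ne' ?_
                simpa [Nat.cast_add] using birkS_le f A (n+1) x
        _ ≤ Filter.atTop.limsup (fun n : ℕ => birkS f A (n+1) x / ((n:ℝ≥0∞)+1))
              + Filter.atTop.limsup (fun n : ℕ => (1:ℝ≥0∞)/n) := limsup_add_le' _ _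
        _ = Filter.atTop.limsup (fun n : ℕ => birkS f A n x / n) := by
              rw [hvanish, add_zero, hshift]
  · rw [tauOrbit_eq, tauOrbit_eq, ← hshift]
    calc Filter.atTop.limsup (fun n : ℕ => birkS f A (n+1) x / ((n:ℝ≥0∞)+1))
        ≤ Filter.atTop.limsup (fun n : ℕ => (1:ℝ≥0∞)/((n:ℝ≥0∞)+1) + birkS f A n (f x) / n) := by
          refine limsup_le_limsup (Eventually.of_forall fun n => ?_)
          show birkS f A (n+1) x / ((n:ℝ≥0∞)+1)
              ≤ 1/((n:ℝ≥0∞)+1) + birkS f A n (f x) / n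
          rw [key n]
          calc (A.indicator (fun _ => (1:ℝ≥0∞)) x + birkS f A n (f x)) / ((n:ℝ≥0∞)+1)
              ≤ (1 + birkS f A n (f x)) / ((n:ℝ≥0∞)+1) := by
                gcongr
                exact Set.indicator_le_self' (fun _ _ => zero_le_one) _
            _ = 1/((n:ℝ≥0∞)+1) + birkS f A n (f x) / ((n:ℝ≥0∞)+1) := ENNReal.add_div
            _ ≤ 1/((n:ℝ≥0∞)+1) + birkS f A n (f x) / n :=
                add_le_add_right (ENNReal.div_le_div_left (by simp) _) _
        _ ≤ Filter.atTop.limsup (fun n : ℕ => (1:ℝ≥0∞)/((n:ℝ≥0∞)+1))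
              + Filter.atTop.limsup (fun n : ℕ => birkS f A n (f x) / n) := limsup_add_le' _ _
        _ = Filter.atTop.limsup (fun n : ℕ => birkS f A n (f x) / n) := by
              rw [hvanish', zero_add]
lemma tau_iterate {X : Type*} (f : X → X) (x : X) (A : Set X) (n : ℕ) :
    tauOrbit f (f^[n] x) A = tauOrbit f x A := by
  induction n with
  | zero => rfl
  | succ n ih => rw [Function.iterate_succ_apply', tau_comp, ih]

lemma measurable_birkS {X : Type*} [MeasurableSpace X] {f : X → X} (hf : Measurable f)
    {A : Set X} (hA : MeasurableSet A) (n : ℕ) :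
    Measurable fun x => birkS f A n x := by
  refine Finset.measurable_sum _ fun j _ => ?_
  exact (measurable_const.indicator hA).comp (hf.iterate j)

lemma measurable_tau {X : Type*} [MeasurableSpace X] {f : X → X} (hf : Measurable f)
    {A : Set X} (hA : MeasurableSet A) :
    Measurable fun x => tauOrbit f x A := by
  have : (fun x => tauOrbit f x A)
      = fun x => ⨅ n : ℕ, ⨆ i : ℕ, ⨆ _ : i ≥ n, birkS f A i x / i := by
    funext x
    rw [tauOrbit_eq, limsup_eq_iInf_iSup_of_nat]
  rw [this]
  refine Measurable.iInf fun n => Measurable.iSup fun i => Measurable.iSup fun _ => ?_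
  exact (measurable_birkS hf hA i).div measurable_const

lemma limsup_finset_sum_le {ι : Type*} (s : Finset ι) (u : ι → ℕ → ℝ≥0∞) :
    Filter.atTop.limsup (fun n => ∑ i ∈ s, u i n) ≤ ∑ i ∈ s, Filter.atTop.limsup (u i) := by
  classical
  induction s using Finset.induction with
  | empty => simp
  | insert a s' hx ih =>
    rw [Finset.sum_insert hx]
    calc Filter.atTop.limsup (fun n => ∑ i ∈ insert a s', u i n)
        = Filter.atTop.limsup (fun n => u a n + ∑ i ∈ s', u i n) := by
          simp only [Finset.sum_insert hx]
      _ ≤ Filter.atTop.limsup (u a) + Filter.atTop.limsup (fun n => ∑ i ∈ s', u i n) :=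
          limsup_add_le' _ _
      _ ≤ _ := add_le_add_right ih _
lemma birkS_mono {X : Type*} (f : X → X) {A B : Set X} (hAB : A ⊆ B) (n : ℕ) (x : X) :
    birkS f A n x ≤ birkS f B n x := by
  refine Finset.sum_le_sum fun j _ => ?_
  exact Set.indicator_le_indicator_of_subset hAB (fun _ => zero_le) _

lemma lintegral_tau_le {X : Type*} [MeasurableSpace X] {f : X → X} (hf : Measurable f)
    {A : Set X} (hA : MeasurableSet A) (μ : Measure X) [IsFiniteMeasure μ]
    (hpres : MeasurePreserving f μ μ) :
    ∫⁻ x, tauOrbit f x A ∂μ ≤ μ A := by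
  refine ENNReal.le_of_forall_pos_le_add fun ε hε hAfin => ?_
  set φ : X → ℝ≥0∞ := fun x => tauOrbit f x A with hφ
  have hφm : Measurable φ := measurable_tau hf hA
  have hφ1 : ∀ x, φ x ≤ 1 := fun x => tau_le_one f x A
  have hφiter : ∀ (n : ℕ) (x : X), φ (f^[n] x) = φ x := fun n x => tau_iterate f x A n
  set ε₂ : ℝ≥0∞ := (ε : ℝ≥0∞) / 2 with hε₂
  have hε₂0 : ε₂ ≠ 0 := by
    simp only [hε₂, ne_eq, ENNReal.div_eq_zero_iff]
    push_neg
    exact ⟨by exact_mod_cast hε.ne', by simp⟩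
  set δ : ℝ≥0∞ := ε₂ / (μ Set.univ + 1) with hδ
  have hδ0 : δ ≠ 0 := by
    simp only [hδ, ne_eq, ENNReal.div_eq_zero_iff]
    push_neg
    exact ⟨hε₂0, by simp [measure_ne_top μ Set.univ]⟩
  have hδμ : δ * μ Set.univ ≤ ε₂ := by
    calc δ * μ Set.univ ≤ δ * (μ Set.univ + 1) := mul_le_mul_right le_self_add _
      _ = ε₂ := ENNReal.div_mul_cancel (by simp [measure_ne_top μ Set.univ])
          (by simp [measure_ne_top μ Set.univ])
  set c : X → ℝ≥0∞ := fun x => φ x - δ with hc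
  have hcm : Measurable c := hφm.sub measurable_const
  have hc1 : ∀ x, c x ≤ 1 := fun x => le_trans tsub_le_self (hφ1 x)
  have hciter : ∀ (n : ℕ) (x : X), c (f^[n] x) = c x := fun n x => by
    simp only [hc, hφiter n x]
  have hcf : ∀ x, c (f x) = c x := fun x => by
    have := hciter 1 x; simpa using this
  have hφc : ∀ x, φ x ≤ c x + δ := fun x => le_tsub_add
  set AM : ℕ → Set X := fun M => {x | ∃ n, 1 ≤ n ∧ n ≤ M ∧ c x ≤ birkS f A n x / n} with hAM
  have hAMmeas : ∀ M, MeasurableSet (AM M) := by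
    intro M
    have : AM M = ⋃ n, ⋃ (_ : 1 ≤ n ∧ n ≤ M), {x | c x ≤ birkS f A n x / n} := by
      ext x
      simp only [hAM, Set.mem_setOf_eq, Set.mem_iUnion, exists_prop]
      tauto
    rw [this]
    refine MeasurableSet.iUnion fun n => MeasurableSet.iUnion fun _ => ?_
    exact measurableSet_le hcm ((measurable_birkS hf hA n).div measurable_const)
  have hAMmono : Monotone AM := by
    intro M M' hMM' x hx
    obtain ⟨n, h1, h2, h3⟩ := hx
    exact ⟨n, h1, h2.trans hMM', h3⟩
  have hAMunion : ∀ x, ∃ M, x ∈ AM M := by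
    intro x
    suffices h : ∃ n, 1 ≤ n ∧ c x ≤ birkS f A n x / n by
      obtain ⟨n, hn1, hn2⟩ := h
      exact ⟨n, n, hn1, le_rfl, hn2⟩
    by_cases hφ0 : φ x = 0
    · refine ⟨1, le_rfl, ?_⟩
      have : c x = 0 := le_antisymm (by rw [← hφ0]; exact tsub_le_self.trans le_rfl) zero_le
      simp [this]
    · have h1 : c x < φ x :=
        ENNReal.sub_lt_self (lt_of_le_of_lt (hφ1 x) ENNReal.one_lt_top).ne hφ0 hδ0
      have h2 : φ x ≤ ⨆ i, ⨆ (_ : i ≥ 1), birkS f A i x / i := by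
        have he : φ x = ⨅ n : ℕ, ⨆ i, ⨆ (_ : i ≥ n), birkS f A i x / i := by
          show tauOrbit f x A = _
          rw [tauOrbit_eq, limsup_eq_iInf_iSup_of_nat]
        rw [he]
        exact iInf_le _ 1
      have h3 := h1.trans_le h2
      rw [lt_iSup_iff] at h3
      obtain ⟨n, hn⟩ := h3
      rw [lt_iSup_iff] at hn
      obtain ⟨hn1, hlt⟩ := hn
      exact ⟨n, hn1, hlt.le⟩
  -- choose M with small complement measure
  have htend : Tendsto (fun M => μ ((AM M)ᶜ)) atTop (𝓝 0) := by
    have h0 : (⋂ M, (AM M)ᶜ) = ∅ := by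
      rw [← Set.compl_iUnion, Set.compl_empty_iff]
      ext x
      simp only [Set.mem_iUnion, Set.mem_univ, iff_true]
      exact hAMunion x
    have := tendsto_measure_iInter_atTop (μ := μ)
      (fun M => (hAMmeas M).compl.nullMeasurableSet)
      (fun M M' h => Set.compl_subset_compl.2 (hAMmono h))
      ⟨0, measure_ne_top μ _⟩
    rw [h0] at this
    simpa [Function.comp_def] using this
  obtain ⟨M, hM⟩ : ∃ M : ℕ, μ ((AM M)ᶜ) ≤ ε₂ := by
    have := (htend.eventually_lt_const (show (0:ℝ≥0∞) < ε₂ by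
      exact pos_iff_ne_zero.2 hε₂0)).exists
    obtain ⟨M, hM⟩ := this
    exact ⟨M, hM.le⟩
  set B : Set X := A ∪ (AM M)ᶜ with hB
  have hBmeas : MeasurableSet B := hA.union (hAMmeas M).compl
  -- the key pointwise claim
  have claim : ∀ N : ℕ, ∀ x, (N : ℝ≥0∞) * c x ≤ birkS f B N x + M * c x := by
    intro N
    induction N using Nat.strong_induction_on with
    | _ N ih =>
      intro x
      rcases le_or_gt N M with hNM | hNM
      · calc (N : ℝ≥0∞) * c x ≤ (M : ℝ≥0∞) * c x :=
            mul_le_mul_left (by exact_mod_cast hNM) _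
          _ ≤ _ := le_add_self
      · by_cases hx : x ∈ AM M
        · obtain ⟨n, hn1, hnM, hcn⟩ := hx
          have hnN : n ≤ N := hnM.trans hNM.le
          have hn0 : (n : ℝ≥0∞) ≠ 0 := by exact_mod_cast (Nat.one_le_iff_ne_zero.1 hn1)
          have hsplit : birkS f B N x = birkS f B n x + birkS f B (N - n) (f^[n] x) := by
            conv_lhs => rw [← Nat.add_sub_cancel' hnN]
            exact birkS_add f B n (N - n) x
          have step1 : (n : ℝ≥0∞) * c x ≤ birkS f B n x := by
            have h1 : (n : ℝ≥0∞) * c x ≤ (n : ℝ≥0∞) * (birkS f A n x / n) :=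
              mul_le_mul_right hcn _
            rw [ENNReal.mul_div_cancel hn0 (by simp)] at h1
            exact h1.trans (birkS_mono f Set.subset_union_left n x)
          have step2 : ((N - n : ℕ) : ℝ≥0∞) * c x
              ≤ birkS f B (N - n) (f^[n] x) + M * c x := by
            have := ih (N - n) (by omega) (f^[n] x)
            rwa [hciter n x] at this
          calc (N : ℝ≥0∞) * c x = ((n : ℝ≥0∞) + ((N - n : ℕ) : ℝ≥0∞)) * c x := by
                rw [← Nat.cast_add, Nat.add_sub_cancel' hnN]
            _ = (n : ℝ≥0∞) * c x + ((N - n : ℕ) : ℝ≥0∞) * c x := by rw [add_mul]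
            _ ≤ birkS f B n x + (birkS f B (N - n) (f^[n] x) + M * c x) :=
                add_le_add step1 step2
            _ = birkS f B N x + M * c x := by rw [hsplit, add_assoc]
        · have hN1 : 1 ≤ N := le_trans (Nat.one_le_iff_ne_zero.2 (by omega)) le_rfl
          have hsplit : birkS f B N x
              = B.indicator (fun _ => (1:ℝ≥0∞)) x + birkS f B (N - 1) (f x) := by
            conv_lhs => rw [show N = 1 + (N - 1) by omega]
            rw [birkS_add f B 1 (N - 1) x]
            simp [birkS]
          have hxB : x ∈ B := Set.mem_union_right _ hx
          have hind : B.indicator (fun _ => (1:ℝ≥0∞)) x = 1 :=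
            Set.indicator_of_mem hxB _
          have step2 : ((N - 1 : ℕ) : ℝ≥0∞) * c x
              ≤ birkS f B (N - 1) (f x) + M * c x := by
            have := ih (N - 1) (by omega) (f x)
            rwa [hcf x] at this
          calc (N : ℝ≥0∞) * c x = ((1 : ℝ≥0∞) + ((N - 1 : ℕ) : ℝ≥0∞)) * c x := by
                rw [show ((1:ℝ≥0∞) + ((N - 1 : ℕ) : ℝ≥0∞)) = (((1 + (N-1) : ℕ)) : ℝ≥0∞) by
                  push_cast; ring]
                congr 2
                omega
            _ = c x + ((N - 1 : ℕ) : ℝ≥0∞) * c x := by rw [add_mul, one_mul]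
            _ ≤ 1 + (birkS f B (N - 1) (f x) + M * c x) := add_le_add (hc1 x) step2
            _ = birkS f B N x + M * c x := by rw [hsplit, hind, add_assoc]
  -- integrate the claim
  have hBint : ∀ N : ℕ, ∫⁻ x, birkS f B N x ∂μ = N * μ B := by
    intro N
    have : ∫⁻ x, birkS f B N x ∂μ
        = ∑ j ∈ Finset.range N, ∫⁻ x, B.indicator (fun _ => (1:ℝ≥0∞)) (f^[j] x) ∂μ := by
      exact lintegral_finset_sum _ fun j _ =>
        (measurable_const.indicator hBmeas).comp (hf.iterate j)
    rw [this]
    have heach : ∀ j : ℕ, ∫⁻ x, B.indicator (fun _ => (1:ℝ≥0∞)) (f^[j] x) ∂μ = μ B := by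
      intro j
      rw [(hpres.iterate j).lintegral_comp (measurable_const.indicator hBmeas)]
      exact lintegral_indicator_one hBmeas
    simp [heach, Finset.sum_const, nsmul_eq_mul]
  have hcint_le : ∫⁻ x, c x ∂μ ≤ μ Set.univ := by
    calc ∫⁻ x, c x ∂μ ≤ ∫⁻ _, 1 ∂μ := lintegral_mono fun x => hc1 x
      _ = μ Set.univ := lintegral_one
  have hcfin : ∫⁻ x, c x ∂μ ≠ ∞ := (hcint_le.trans_lt (measure_lt_top μ _)).ne
  set a : ℝ≥0∞ := ∫⁻ x, c x ∂μ with ha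
  set b : ℝ≥0∞ := μ B with hb
  have hbfin : b ≠ ∞ := measure_ne_top μ _
  have hint : ∀ N : ℕ, (N : ℝ≥0∞) * a ≤ (N : ℝ≥0∞) * b + M * a := by
    intro N
    calc (N : ℝ≥0∞) * a = ∫⁻ x, (N : ℝ≥0∞) * c x ∂μ := (lintegral_const_mul _ hcm).symm
      _ ≤ ∫⁻ x, (birkS f B N x + M * c x) ∂μ := lintegral_mono (claim N)
      _ = (N : ℝ≥0∞) * b + M * a := by
          rw [lintegral_add_right _ (hcm.const_mul _), hBint N, lintegral_const_mul _ hcm]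
  have hab : a ≤ b := by
    have hK : ∀ K : ℕ, 1 ≤ K → a ≤ b + (M * b) / K := by
      intro K hK1
      have hK0 : (K : ℝ≥0∞) ≠ 0 := by exact_mod_cast (Nat.one_le_iff_ne_zero.1 hK1)
      have hKt : (K : ℝ≥0∞) ≠ ∞ := by simp
      have h1 := hint (M + K)
      rw [Nat.cast_add, add_mul, add_mul] at h1
      -- M*a + K*a ≤ M*b + K*b + M*a
      have h2 : (K : ℝ≥0∞) * a ≤ (M : ℝ≥0∞) * b + (K : ℝ≥0∞) * b := by
        have hMa : (M : ℝ≥0∞) * a ≠ ∞ := ENNReal.mul_ne_top (by simp) hcfin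
        refine (ENNReal.add_le_add_iff_right hMa).1 ?_
        calc (K : ℝ≥0∞) * a + (M : ℝ≥0∞) * a = (M : ℝ≥0∞) * a + (K : ℝ≥0∞) * a := by ring
          _ ≤ (M : ℝ≥0∞) * b + (K : ℝ≥0∞) * b + (M : ℝ≥0∞) * a := h1
      calc a = (K : ℝ≥0∞) * a / K := by
            rw [mul_comm, mul_div_assoc, ENNReal.div_self hK0 hKt, mul_one]
        _ ≤ ((M : ℝ≥0∞) * b + (K : ℝ≥0∞) * b) / K := ENNReal.div_le_div_right h2 _
        _ = (M : ℝ≥0∞) * b / K + (K : ℝ≥0∞) * b / K := ENNReal.add_div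
        _ = b + (M * b) / K := by
            rw [mul_comm (K : ℝ≥0∞) b]
            rw [mul_div_assoc b, ENNReal.div_self hK0 hKt, mul_one, add_comm]
    have htend2 : Tendsto (fun K : ℕ => b + (M * b) / K) atTop (𝓝 b) := by
      have h3 : Tendsto (fun K : ℕ => (M * b) / K) atTop (𝓝 0) := by
        have h4 : Tendsto (fun K : ℕ => (M * b) * (K : ℝ≥0∞)⁻¹) atTop (𝓝 ((M * b) * 0)) :=
          ENNReal.Tendsto.const_mul ENNReal.tendsto_inv_nat_nhds_zero
            (Or.inr (ENNReal.mul_ne_top (by simp) hbfin))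
        simpa [div_eq_mul_inv] using h4
      have := Tendsto.add (tendsto_const_nhds (x := b) (f := atTop (α := ℕ))) h3
      simpa using this
    exact ge_of_tendsto htend2 (eventually_atTop.2 ⟨1, fun K hKK => hK K hKK⟩)
  -- final estimate
  calc ∫⁻ x, φ x ∂μ ≤ ∫⁻ x, (c x + δ) ∂μ := lintegral_mono fun x => hφc x
    _ = a + δ * μ Set.univ := by rw [lintegral_add_right _ measurable_const, lintegral_const]
    _ ≤ b + ε₂ := add_le_add hab hδμ
    _ ≤ (μ A + μ ((AM M)ᶜ)) + ε₂ := add_le_add_left (measure_union_le _ _) _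
    _ ≤ (μ A + ε₂) + ε₂ := add_le_add_left (add_le_add_right hM _) _
    _ = μ A + ε := by rw [add_assoc, hε₂, ENNReal.add_halves]
lemma one_le_tsum_tau {X : Type*} [TopologicalSpace X] [CompactSpace X] (f : X → X) (x : X)
    (I : ℕ → Set X) (hcov : Set.univ ⊆ ⋃ n, I n) (hopen : ∀ n, IsOpen (I n)) :
    1 ≤ ∑' n, tauOrbit f x (I n) := by
  obtain ⟨s, hs⟩ := isCompact_univ.elim_finite_subcover I hopen hcov
  have key : ∀ n : ℕ, 1 ≤ n → (1:ℝ≥0∞) ≤ ∑ i ∈ s, birkS f (I i) n x / n := by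
    intro n hn
    have hn0 : (n:ℝ≥0∞) ≠ 0 := by exact_mod_cast Nat.one_le_iff_ne_zero.1 hn
    have hsum : (n:ℝ≥0∞) ≤ ∑ i ∈ s, birkS f (I i) n x := by
      calc (n:ℝ≥0∞) = ∑ _j ∈ Finset.range n, (1:ℝ≥0∞) := by simp
        _ ≤ ∑ j ∈ Finset.range n, ∑ i ∈ s, (I i).indicator (fun _ => (1:ℝ≥0∞)) (f^[j] x) := by
            refine Finset.sum_le_sum fun j _ => ?_
            obtain ⟨i, his, hmem⟩ : ∃ i ∈ s, f^[j] x ∈ I i := by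
              have := hs (Set.mem_univ (f^[j] x))
              simpa using this
            calc (1:ℝ≥0∞) = (I i).indicator (fun _ => (1:ℝ≥0∞)) (f^[j] x) :=
                  (Set.indicator_of_mem hmem fun _ => (1:ℝ≥0∞)).symm
              _ ≤ ∑ i ∈ s, (I i).indicator (fun _ => (1:ℝ≥0∞)) (f^[j] x) :=
                  Finset.single_le_sum
                    (f := fun i => (I i).indicator (fun _ => (1:ℝ≥0∞)) (f^[j] x))
                    (fun i _ => zero_le) his
        _ = ∑ i ∈ s, birkS f (I i) n x := Finset.sum_comm
    calc (1:ℝ≥0∞) = (n:ℝ≥0∞)/n := (ENNReal.div_self hn0 (by simp)).symm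
      _ ≤ (∑ i ∈ s, birkS f (I i) n x)/n := ENNReal.div_le_div_right hsum _
      _ = ∑ i ∈ s, birkS f (I i) n x / n := by
          simp only [div_eq_mul_inv, Finset.sum_mul]
  calc (1:ℝ≥0∞) = Filter.atTop.limsup (fun _ : ℕ => (1:ℝ≥0∞)) := (Filter.limsup_const (1:ℝ≥0∞)).symm
    _ ≤ Filter.atTop.limsup (fun n => ∑ i ∈ s, birkS f (I i) n x / n) :=
        limsup_le_limsup (eventually_atTop.2 ⟨1, fun n hn => key n hn⟩)
    _ ≤ ∑ i ∈ s, Filter.atTop.limsup (fun n => birkS f (I i) n x / n) :=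
        limsup_finset_sum_le s _
    _ = ∑ i ∈ s, tauOrbit f x (I i) := rfl
    _ ≤ ∑' i, tauOrbit f x (I i) := ENNReal.sum_le_tsum s

lemma exists_good_cover {X : Type*} [MetricSpace X] [CompactSpace X] [MeasurableSpace X]
    [BorelSpace X] (μ : Measure X) [IsFiniteMeasure μ] {r : ℝ} (hr : 0 < r)
    {ε : ℝ≥0∞} (hε : ε ≠ 0) :
    ∃ I : ℕ → Set X, (Set.univ ⊆ ⋃ n, I n) ∧ (∀ n, IsOpen (I n)) ∧
      (∀ n, EMetric.diam (I n) ≤ ENNReal.ofReal r) ∧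
      ∑' n, μ (I n) ≤ μ Set.univ + ε := by
  cases isEmpty_or_nonempty X with
  | inl hempty =>
    refine ⟨fun _ => ∅, ?_, fun n => isOpen_empty, fun n => by simp [EMetric.diam], by simp⟩
    intro x _
    exact absurd trivial (hempty.elim x)
  | inr hne =>
    have hcov0 : Set.univ ⊆ ⋃ y : X, Metric.ball y (r/4) := by
      intro z _
      exact Set.mem_iUnion.2 ⟨z, Metric.mem_ball_self (by linarith)⟩
    obtain ⟨t, ht⟩ := isCompact_univ.elim_finite_subcover
      (fun y : X => Metric.ball y (r/4)) (fun _ => Metric.isOpen_ball) hcov0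
    have htne : (t : Set X).Nonempty ∨ IsEmpty X := by
      rcases t.eq_empty_or_nonempty with h | h
      · subst h
        left
        exfalso
        obtain ⟨z⟩ := hne
        have := ht (Set.mem_univ z)
        simpa using this
      · exact Or.inl h
    obtain ⟨y, hy⟩ : ∃ y : ℕ → X, (t : Set X) = Set.range y := by
      refine (t.finite_toSet.countable).exists_eq_range ?_
      rcases htne with h | h
      · exact h
      · exact absurd h (not_isEmpty_of_nonempty X)
    have hcover : Set.univ ⊆ ⋃ i : ℕ, Metric.ball (y i) (r/4) := by
      intro z hz
      have := ht hz
      rw [Set.mem_iUnion₂] at this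
      obtain ⟨w, hwt, hw⟩ := this
      have : w ∈ Set.range y := by rw [← hy]; exact hwt
      obtain ⟨i, rfl⟩ := this
      exact Set.mem_iUnion.2 ⟨i, hw⟩
    set E : ℕ → Set X := disjointed (fun i => Metric.ball (y i) (r/4)) with hE
    have hEmeas : ∀ i, MeasurableSet (E i) :=
      MeasurableSet.disjointed fun i => Metric.isOpen_ball.measurableSet
    have hEdisj : Pairwise (Function.onFun Disjoint E) := disjoint_disjointed _
    have hEsub : ∀ i, E i ⊆ Metric.ball (y i) (r/4) := fun i => disjointed_subset _ i
    have hEsum : ∑' i, μ (E i) ≤ μ Set.univ := by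
      rw [← measure_iUnion hEdisj hEmeas]
      exact measure_mono (Set.subset_univ _)
    obtain ⟨δ, hδpos, hδsum⟩ := ENNReal.exists_pos_sum_of_countable hε ℕ
    have hVex : ∀ i : ℕ, ∃ V : Set X, E i ⊆ V ∧ IsOpen V ∧ μ V < μ (E i) + δ i := by
      intro i
      exact (E i).exists_isOpen_lt_of_lt _
        (ENNReal.lt_add_right (measure_ne_top μ _) (by exact_mod_cast (hδpos i).ne'))
    choose V hVsub hVopen hVlt using hVex
    refine ⟨fun i => V i ∩ Metric.ball (y i) (r/2), ?_, ?_, ?_, ?_⟩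
    · intro z hz
      have h1 : z ∈ ⋃ i, E i := by
        rw [hE, iUnion_disjointed]
        exact hcover hz
      obtain ⟨i, hi⟩ := Set.mem_iUnion.1 h1
      refine Set.mem_iUnion.2 ⟨i, hVsub i hi, ?_⟩
      exact Metric.ball_subset_ball (by linarith) (hEsub i hi)
    · exact fun i => (hVopen i).inter Metric.isOpen_ball
    · intro i
      calc EMetric.diam (V i ∩ Metric.ball (y i) (r/2))
          ≤ EMetric.diam (Metric.ball (y i) (r/2)) :=
            EMetric.diam_mono Set.inter_subset_right
        _ ≤ 2 * ENNReal.ofReal (r/2) := by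
            rw [← Metric.emetric_ball]
            exact EMetric.diam_ball
        _ = ENNReal.ofReal r := by
            rw [← ENNReal.ofReal_ofNat 2, ← ENNReal.ofReal_mul (by norm_num)]
            congr 1
            ring
    · calc ∑' i, μ (V i ∩ Metric.ball (y i) (r/2))
          ≤ ∑' i, (μ (E i) + δ i) := by
            refine ENNReal.tsum_le_tsum fun i => ?_
            exact le_trans (measure_mono Set.inter_subset_left) (hVlt i).le
        _ = (∑' i, μ (E i)) + ∑' i, (δ i : ℝ≥0∞) := ENNReal.tsum_add
        _ ≤ μ Set.univ + ε := add_le_add hEsum hδsum.le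

/-- If `𝕏` is a perfect compact metric space, `f : 𝕏 → 𝕏` is Borel measurable and `μ` is an
`f`-invariant finite Borel measure, then `η_x` is a probability measure (`η_x(𝕏) = 1`) for
`μ`-almost every `x ∈ 𝕏`. -/
theorem eta_probability_ae
    {X : Type*} [MetricSpace X] [CompactSpace X] [MeasurableSpace X] [BorelSpace X]
    (hperf : Perfect (Set.univ : Set X))
    (f : X → X) (hf : Measurable f)
    (η : X → Measure X) (hη : ∀ x : X, ∀ E : Set X, MeasurableSet E → η x E = nuFun f x E)
    (μ : Measure X) [IsFiniteMeasure μ]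
    (hinv : ∀ E : Set X, MeasurableSet E → μ (f ⁻¹' E) = μ E) :
    ∀ᵐ x ∂μ, η x Set.univ = 1 := by
  have hpres : MeasurePreserving f μ μ := by
    refine ⟨hf, ?_⟩
    ext E hE
    rw [Measure.map_apply hf hE]
    exact hinv E hE
  have hlow : ∀ (x : X) (r : ℝ), 1 ≤ nuAux f x r Set.univ := by
    intro x r
    refine le_iInf fun I => le_iInf fun hcov => le_iInf fun hopen => le_iInf fun _ => ?_
    exact one_le_tsum_tau f x I hcov hopen
  have hG : ∀ k m : ℕ, ∃ I : ℕ → Set X, (Set.univ ⊆ ⋃ n, I n) ∧ (∀ n, IsOpen (I n)) ∧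
      (∀ n, EMetric.diam (I n) ≤ ENNReal.ofReal (1/((k:ℝ)+1))) ∧
      ∑' n, μ (I n) ≤ μ Set.univ + (1:ℝ≥0∞)/((m:ℝ≥0∞)+1) := by
    intro k m
    refine exists_good_cover μ (by positivity) ?_
    simp [ENNReal.div_eq_zero_iff]
  choose Icov hIcov hIopen hIdiam hIsum using hG
  set G : ℕ → ℕ → X → ℝ≥0∞ := fun k m x => ∑' n, tauOrbit f x (Icov k m n) with hGdef
  have hGmeas : ∀ k m, Measurable (G k m) := fun k m =>
    Measurable.ennreal_tsum fun n => measurable_tau hf (hIopen k m n).measurableSet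
  have hGone : ∀ k m x, 1 ≤ G k m x := fun k m x =>
    one_le_tsum_tau f x _ (hIcov k m) (hIopen k m)
  have hGint : ∀ k m, ∫⁻ x, G k m x ∂μ ≤ μ Set.univ + (1:ℝ≥0∞)/((m:ℝ≥0∞)+1) := by
    intro k m
    calc ∫⁻ x, G k m x ∂μ = ∑' n, ∫⁻ x, tauOrbit f x (Icov k m n) ∂μ :=
        lintegral_tsum fun n => (measurable_tau hf (hIopen k m n).measurableSet).aemeasurable
      _ ≤ ∑' n, μ (Icov k m n) := ENNReal.tsum_le_tsum fun n =>
          lintegral_tau_le hf (hIopen k m n).measurableSet μ hpres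
      _ ≤ μ Set.univ + (1:ℝ≥0∞)/((m:ℝ≥0∞)+1) := hIsum k m
  set H : ℕ → X → ℝ≥0∞ := fun k x => ⨅ m, G k m x with hHdef
  have hHmeas : ∀ k, Measurable (H k) := fun k => Measurable.iInf fun m => hGmeas k m
  have hHone : ∀ k x, 1 ≤ H k x := fun k x => le_iInf fun m => hGone k m x
  have hHint : ∀ k, ∫⁻ x, H k x ∂μ ≤ μ Set.univ := by
    intro k
    refine ENNReal.le_of_forall_pos_le_add fun ε hε hfin => ?_
    obtain ⟨m, hm⟩ : ∃ m : ℕ, (1:ℝ≥0∞)/((m:ℝ≥0∞)+1) ≤ (ε:ℝ≥0∞) := by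
      obtain ⟨n, hn⟩ := ENNReal.exists_inv_nat_lt (show ((ε:ℝ≥0∞)) ≠ 0 by
        exact_mod_cast hε.ne')
      refine ⟨n, ?_⟩
      rw [one_div]
      refine le_trans ?_ hn.le
      exact ENNReal.inv_le_inv.2 le_self_add
    calc ∫⁻ x, H k x ∂μ ≤ ∫⁻ x, G k m x ∂μ := lintegral_mono fun x => iInf_le _ m
      _ ≤ μ Set.univ + (1:ℝ≥0∞)/((m:ℝ≥0∞)+1) := hGint k m
      _ ≤ μ Set.univ + ε := add_le_add_right hm _
  have hae : ∀ k, ∀ᵐ x ∂μ, H k x ≤ 1 := by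
    intro k
    have hsub : ∫⁻ x, (H k x - 1) ∂μ = 0 := by
      have heq : ∫⁻ x, (H k x - 1) ∂μ = ∫⁻ x, H k x ∂μ - ∫⁻ _, (1:ℝ≥0∞) ∂μ := by
        refine lintegral_sub measurable_const ?_ (ae_of_all _ (hHone k))
        rw [lintegral_one]; exact measure_ne_top μ _
      rw [heq, lintegral_one]
      exact tsub_eq_zero_of_le (hHint k)
    have h0 := (lintegral_eq_zero_iff ((hHmeas k).sub measurable_const)).1 hsub
    filter_upwards [h0] with x hx
    have : H k x - 1 = 0 := hx
    exact tsub_eq_zero_iff_le.1 this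
  have hae' : ∀ᵐ x ∂μ, ∀ k, H k x ≤ 1 := ae_all_iff.2 hae
  filter_upwards [hae'] with x hx
  rw [hη x Set.univ MeasurableSet.univ]
  have hup : nuFun f x Set.univ ≤ 1 := by
    refine iSup_le fun r => iSup_le fun hr => ?_
    obtain ⟨k, hk⟩ : ∃ k : ℕ, 1/((k:ℝ)+1) ≤ r := by
      obtain ⟨k, hk⟩ := exists_nat_one_div_lt hr
      exact ⟨k, hk.le⟩
    have h1 : nuAux f x r Set.univ ≤ H k x := by
      refine le_iInf fun m => ?_
      refine iInf_le_of_le (Icov k m) (iInf_le_of_le (hIcov k m)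
        (iInf_le_of_le (hIopen k m) (iInf_le_of_le (fun n => ?_) le_rfl)))
      exact le_trans (hIdiam k m n) (ENNReal.ofReal_le_ofReal hk)
    exact h1.trans (hx k)
  have hlow' : 1 ≤ nuFun f x Set.univ := by
    refine le_trans (hlow x 1) ?_
    exact le_iSup₂ (f := fun (r : ℝ) (_ : 0 < r) => nuAux f x r Set.univ) 1 one_pos
  exact le_antisymm hup hlow'
end

section
/- In every mixing topological Markov chain (𝕏,σ) over a countable alphabet with at least two symbols and aperiodic incidence matrix, the set of wild historic points of σ is residual in 𝕏, i.e. it contains a countable intersection of open dense subsets of 𝕏. -/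
open MeasureTheory Filter Set Topology
open scoped ENNReal

section Glue

variable {S : Type*} {a : S → S → Prop}

/-- Extend a word, admissible on `[0, len]`, by a connecting path of length `N` to symbol `c`. -/
private def glueTo (conn : S → S → ℕ → S) (len : ℕ) (c : S) (u : ℕ → S) : ℕ → S :=
  fun i => if i ≤ len then u i else conn (u len) c (i - len)

private theorem glueTo_prefix (conn : S → S → ℕ → S) (len : ℕ) (c : S) (u : ℕ → S)
    {i : ℕ} (hi : i ≤ len) : glueTo conn len c u i = u i := by
  simp [glueTo, hi]

private theorem glueTo_end {N : ℕ} (hN : 1 ≤ N) (conn : S → S → ℕ → S)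
    (hNe : ∀ b c, conn b c N = c) (len : ℕ) (c : S) (u : ℕ → S) :
    glueTo conn len c u (len + N) = c := by
  have h : ¬ (len + N ≤ len) := by omega
  simp [glueTo, h, hNe]

private theorem glueTo_adm {N : ℕ} (hN : 1 ≤ N) (conn : S → S → ℕ → S)
    (h0 : ∀ b c, conn b c 0 = b)
    (hadm : ∀ b c, ∀ i < N, a (conn b c i) (conn b c (i + 1)))
    (len : ℕ) (c : S) (u : ℕ → S) (hu : ∀ i < len, a (u i) (u (i + 1))) :
    ∀ i < len + N, a (glueTo conn len c u i) (glueTo conn len c u (i + 1)) := by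
  intro i hi
  by_cases h1 : i + 1 ≤ len
  · rw [glueTo_prefix conn len c u (by omega), glueTo_prefix conn len c u h1]
    exact hu i (by omega)
  · -- i ≥ len
    have hilen : len ≤ i := by omega
    have key : ∀ r ≤ N, glueTo conn len c u (len + r) = conn (u len) c r := by
      intro r hr
      rcases Nat.eq_zero_or_pos r with rfl | hrpos
      · rw [glueTo_prefix conn len c u (by omega)]
        rw [show len + 0 = len by omega, h0]
      · have : ¬ (len + r ≤ len) := by omega
        simp only [glueTo, this, if_false]
        congr 1
        omega
    obtain ⟨r, rfl⟩ : ∃ r, i = len + r := ⟨i - len, by omega⟩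
    have hrN : r < N := by omega
    have e1 := key r (by omega)
    have e2 := key (r + 1) (by omega)
    rw [show len + r + 1 = len + (r + 1) by omega] at *
    rw [e1, e2]
    exact hadm _ _ r hrN

/-- The word following `x`, then visiting `ε 0, ε 1, …, ε (j-1)` at intervals of length `N`
after position `base`. -/
private def branchWord (conn : S → S → ℕ → S) (N : ℕ) (x : ℕ → S) (base : ℕ) (ε : ℕ → S) :
    ℕ → ℕ → S
  | 0 => x
  | j + 1 => glueTo conn (base + j * N) (ε j) (branchWord conn N x base ε j)

private theorem branchWord_props {N : ℕ} (hN : 1 ≤ N) (conn : S → S → ℕ → S)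
    (h0 : ∀ b c, conn b c 0 = b) (hNe : ∀ b c, conn b c N = c)
    (hadm : ∀ b c, ∀ i < N, a (conn b c i) (conn b c (i + 1)))
    (x : ℕ → S) (hx : ∀ i, a (x i) (x (i + 1))) (base : ℕ) (ε : ℕ → S) : ∀ j : ℕ,
    (∀ i ≤ base, branchWord conn N x base ε j i = x i) ∧
    (∀ i < base + j * N,
      a (branchWord conn N x base ε j i) (branchWord conn N x base ε j (i + 1))) ∧
    (∀ i < j, branchWord conn N x base ε j (base + (i + 1) * N) = ε i) := by
  intro j
  induction j with
  | zero =>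
    refine ⟨fun i _ => rfl, fun i _ => hx i, fun i hi => absurd hi (by omega)⟩
  | succ j ih =>
    obtain ⟨ih1, ih2, ih3⟩ := ih
    have hlen : base + (j + 1) * N = (base + j * N) + N := by ring
    refine ⟨?_, ?_, ?_⟩
    · intro i hi
      rw [show branchWord conn N x base ε (j+1)
            = glueTo conn (base + j * N) (ε j) (branchWord conn N x base ε j) from rfl,
        glueTo_prefix conn _ _ _ (by omega)]
      exact ih1 i hi
    · intro i hi
      rw [hlen] at hi
      exact glueTo_adm hN conn h0 hadm _ _ _ ih2 i hi
    · intro i hi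
      rcases Nat.lt_succ_iff_lt_or_eq.1 hi with hij | rfl
      · rw [show branchWord conn N x base ε (j+1)
              = glueTo conn (base + j * N) (ε j) (branchWord conn N x base ε j) from rfl,
          glueTo_prefix conn _ _ _ (by nlinarith)]
        exact ih3 i hij
      · rw [show branchWord conn N x base ε (i+1)
              = glueTo conn (base + i * N) (ε i) (branchWord conn N x base ε i) from rfl,
          show base + (i + 1) * N = (base + i * N) + N by ring]
        exact glueTo_end hN conn hNe _ _ _

end Glue

section Periodic

variable {S : Type*} {a : S → S → Prop}

/-- `MarkovShift`-like admissibility packaged: existence of a periodic admissible point with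
prescribed prefix and prescribed symbols at the branching positions. -/
private theorem exists_periodic_point {N : ℕ} (hN : 1 ≤ N) (conn : S → S → ℕ → S)
    (h0 : ∀ b c, conn b c 0 = b) (hNe : ∀ b c, conn b c N = c)
    (hadm : ∀ b c, ∀ i < N, a (conn b c i) (conn b c (i + 1)))
    (x : ℕ → S) (hx : ∀ i, a (x i) (x (i + 1))) (base j : ℕ) (ε : ℕ → S) :
    ∃ p : ℕ → S, (∀ i, a (p i) (p (i + 1))) ∧
      (∀ i ≤ base, p i = x i) ∧
      (∀ i < j, p (base + (i + 1) * N) = ε i) ∧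
      (∀ l i, p (l * (base + j * N + N) + i) = p i) := by
  obtain ⟨hW1, hW2, hW3⟩ := branchWord_props hN conn h0 hNe hadm x hx base ε j
  set W := branchWord conn N x base ε j with hW
  set u := glueTo conn (base + j * N) (x 0) W with hu
  set q := base + j * N + N with hq
  have hq1 : 1 ≤ q := by omega
  have huW : ∀ i ≤ base + j * N, u i = W i := fun i hi => glueTo_prefix conn _ _ _ hi
  have huq : u q = x 0 := glueTo_end hN conn hNe _ _ _
  have hu0 : u 0 = x 0 := by rw [huW 0 (by omega)]; exact hW1 0 (by omega)
  have huadm : ∀ i < q, a (u i) (u (i + 1)) :=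
    glueTo_adm hN conn h0 hadm _ _ _ hW2
  refine ⟨fun i => u (i % q), ?_, ?_, ?_, ?_⟩
  · intro i
    show a (u (i % q)) (u ((i + 1) % q))
    have hr : i % q < q := Nat.mod_lt _ (by omega)
    have hmod : (i + 1) % q = (i % q + 1) % q := by
      conv_lhs => rw [← Nat.mod_add_mod]
    by_cases hcase : i % q + 1 < q
    · rw [hmod, Nat.mod_eq_of_lt hcase]
      exact huadm _ hr
    · have hqe : i % q + 1 = q := by omega
      rw [hmod, hqe, Nat.mod_self]
      have := huadm (i % q) hr
      rw [hqe, huq, ← hu0] at this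
      exact this
  · intro i hi
    show u (i % q) = x i
    rw [Nat.mod_eq_of_lt (show i < q by omega), huW i (by omega)]
    exact hW1 i hi
  · intro i hi
    have hpos : base + (i + 1) * N ≤ base + j * N := by
      have : (i + 1) * N ≤ j * N := Nat.mul_le_mul_right _ (by omega)
      omega
    have hlt : base + (i + 1) * N < q := by omega
    show u ((base + (i + 1) * N) % q) = ε i
    rw [Nat.mod_eq_of_lt hlt, huW _ hpos]
    exact hW3 i hi
  · intro l i
    show u ((l * q + i) % q) = u (i % q)
    rw [Nat.mul_comm, Nat.mul_add_mod]

/-- Splice: modify `y` after time `n` so that it eventually follows `p` exactly,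
starting at time `n - 1 + N`. -/
private theorem exists_splice {N : ℕ} (hN : 1 ≤ N) (conn : S → S → ℕ → S)
    (h0 : ∀ b c, conn b c 0 = b) (hNe : ∀ b c, conn b c N = c)
    (hadm : ∀ b c, ∀ i < N, a (conn b c i) (conn b c (i + 1)))
    (y p : ℕ → S) (hy : ∀ i, a (y i) (y (i + 1))) (hp : ∀ i, a (p i) (p (i + 1)))
    (n : ℕ) (hn : 1 ≤ n) :
    ∃ z : ℕ → S, (∀ i, a (z i) (z (i + 1))) ∧ (∀ i < n, z i = y i) ∧
      (∀ i, z (n - 1 + N + i) = p i) := by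
  set m := n - 1 with hm
  refine ⟨fun i => if i < n then y i else if i < m + N then conn (y m) (p 0) (i - m)
    else p (i - (m + N)), ?_, ?_, ?_⟩
  · intro i
    have key : ∀ r ≤ N, (fun i => if i < n then y i else if i < m + N then
        conn (y m) (p 0) (i - m) else p (i - (m + N))) (m + r) = conn (y m) (p 0) r := by
      intro r hr
      rcases Nat.eq_zero_or_pos r with rfl | hrpos
      · simp only [Nat.add_zero, show m < n by omega, if_true, h0]
      · rcases Nat.lt_or_ge r N with hrN | hrN
        · simp only [show ¬ (m + r < n) by omega, if_false, show m + r < m + N by omega,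
            if_true, Nat.add_sub_cancel_left]
        · have hrN' : r = N := by omega
          rw [hrN']
          simp only [show ¬ (m + N < n) by omega, if_false, lt_irrefl, if_false, hNe]
          simp
    by_cases h1 : i + 1 < n
    · simp only [show i < n by omega, h1, if_true]
      exact hy i
    · by_cases h2 : i < m + N
      · -- m ≤ i < m + N
        have him : m ≤ i := by omega
        obtain ⟨r, rfl⟩ : ∃ r, i = m + r := ⟨i - m, by omega⟩
        have hrN : r < N := by omega
        have e1 := key r (by omega)
        have e2 := key (r + 1) (by omega)
        rw [show m + r + 1 = m + (r + 1) by omega] at *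
        have e1' : (if m + r < n then y (m + r) else if m + r < m + N then
            conn (y m) (p 0) (m + r - m) else p (m + r - (m + N))) = conn (y m) (p 0) r := e1
        have e2' : (if m + (r + 1) < n then y (m + (r + 1)) else if m + (r + 1) < m + N then
            conn (y m) (p 0) (m + (r + 1) - m) else p (m + (r + 1) - (m + N)))
            = conn (y m) (p 0) (r + 1) := e2
        beta_reduce
        rw [e1', e2']
        exact hadm _ _ r hrN
      · -- i ≥ m + N
        have h3 : ¬ (i < n) := by omega
        have h4 : ¬ (i + 1 < n) := by omega
        have h5 : ¬ (i + 1 < m + N) := by omega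
        simp only [h3, h4, h2, h5, if_false]
        rw [show i + 1 - (m + N) = (i - (m + N)) + 1 by omega]
        exact hp _
  · intro i hi; simp [hi]
  · intro i
    have h3 : ¬ (m + N + i < n) := by omega
    have h4 : ¬ (m + N + i < m + N) := by omega
    simp only [h3, h4, if_false]
    congr 1
    omega

end Periodic

section Multi

variable {S : Type*} {a : S → S → Prop}

private theorem exists_multi_splice {N : ℕ} (hN : 1 ≤ N) (conn : S → S → ℕ → S)
    (h0 : ∀ b c, conn b c 0 = b) (hNe : ∀ b c, conn b c N = c)
    (hadm : ∀ b c, ∀ i < N, a (conn b c i) (conn b c (i + 1)))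
    (t q : ℕ) (hq : 1 ≤ q) :
    ∀ l : List (ℕ → S), (∀ p ∈ l, ∀ i, a (p i) (p (i + 1))) →
    ∀ y : ℕ → S, (∀ i, a (y i) (y (i + 1))) → ∀ n : ℕ, 1 ≤ n →
    ∃ z : ℕ → S, (∀ i, a (z i) (z (i + 1))) ∧ (∀ i < n, z i = y i) ∧
      ∀ p ∈ l, ∃ s L : ℕ, s + 1 ≤ L * q ∧ t ≤ L * q ∧ ∀ i ≤ L * q + t, z (s + i) = p i := by
  intro l
  induction l with
  | nil => exact fun _ y hy n hn => ⟨y, hy, fun i _ => rfl, by simp⟩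
  | cons p l ih =>
    intro hl y hy n hn
    obtain ⟨z₁, hz₁adm, hz₁pre, hz₁tail⟩ :=
      exists_splice hN conn h0 hNe hadm y p hy (hl p (by simp)) n hn
    set s := n - 1 + N with hs
    set L := s + t + 1 with hL
    have hLq : L ≤ L * q := Nat.le_mul_of_pos_right _ (by omega)
    have hn' : n ≤ s + L * q + t + 2 := by omega
    obtain ⟨z, hzadm, hzpre, hzl⟩ := ih (fun p' hp' => hl p' (by simp [hp']))
      z₁ hz₁adm (s + L * q + t + 2) (by omega)
    refine ⟨z, hzadm, ?_, ?_⟩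
    · intro i hi
      rw [hzpre i (by omega)]
      exact hz₁pre i hi
    · intro p' hp'
      rcases List.mem_cons.1 hp' with rfl | hp'
      · refine ⟨s, L, by omega, by omega, ?_⟩
        intro i hi
        rw [hzpre (s + i) (by omega)]
        exact hz₁tail i
      · exact hzl p' hp'

end Multi

private theorem exists_exp_ge (A B : ℕ) : ∃ j : ℕ, 1 ≤ j ∧ A + B * j ≤ 2 ^ j := by
  set k := A + B + 2 with hk
  refine ⟨4 * k, by omega, ?_⟩
  have h1 : k + 1 ≤ 2 ^ k := Nat.lt_two_pow_self (n := k)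
  have h2 : (k + 1) ^ 4 ≤ (2 ^ k) ^ 4 := Nat.pow_le_pow_left h1 4
  have h3 : (2 ^ k) ^ 4 = 2 ^ (4 * k) := by rw [← pow_mul, Nat.mul_comm]
  have h4 : A + B * (4 * k) ≤ (k + 1) ^ 4 := by nlinarith [sq_nonneg k, Nat.zero_le k]
  omega

/-- The space of admissible sequences of a topological Markov chain with alphabet `S` and
incidence relation `a` (`a b c` means the transition `b → c` is allowed). -/
def MarkovShift {S : Type*} (a : S → S → Prop) : Type _ :=
  {x : ℕ → S // ∀ i : ℕ, a (x i) (x (i + 1))}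

/-- The metric `d(x,y) = (1/2)^(min{i : x_i ≠ y_i})` on sequence space. -/
noncomputable instance {S : Type*} [TopologicalSpace S] [DiscreteTopology S] :
    MetricSpace (ℕ → S) :=
  PiNat.metricSpace

noncomputable instance {S : Type*} [TopologicalSpace S] [DiscreteTopology S]
    (a : S → S → Prop) : MetricSpace (MarkovShift a) :=
  inferInstanceAs (MetricSpace {x : ℕ → S // ∀ i : ℕ, a (x i) (x (i + 1))})

noncomputable instance {S : Type*} [TopologicalSpace S] [DiscreteTopology S] (a : S → S → Prop) :
    MeasurableSpace (MarkovShift a) := borel _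

instance {S : Type*} [TopologicalSpace S] [DiscreteTopology S] (a : S → S → Prop) :
    BorelSpace (MarkovShift a) := ⟨rfl⟩

/-- The left shift map on the topological Markov chain. -/
def markovLeftShift {S : Type*} (a : S → S → Prop) : MarkovShift a → MarkovShift a :=
  fun x => ⟨fun i => x.1 (i + 1), fun i => x.2 (i + 1)⟩

/-- Aperiodicity of the incidence matrix: there is `N ≥ 1` such that any two symbols are
joined by an admissible word of length `N`. -/
def MarkovAperiodic {S : Type*} (a : S → S → Prop) : Prop :=
  ∃ N : ℕ, 1 ≤ N ∧ ∀ b c : S, ∃ u : ℕ → S, u 0 = b ∧ u N = c ∧ ∀ i < N, a (u i) (u (i + 1))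

section Tau

variable {S : Type*} [TopologicalSpace S] [DiscreteTopology S] {a : S → S → Prop}

private theorem iterate_shift_apply (z : MarkovShift a) (j i : ℕ) :
    ((markovLeftShift a)^[j] z).1 i = z.1 (i + j) := by
  induction j generalizing z with
  | zero => rfl
  | succ j ih =>
    rw [Function.iterate_succ_apply, ih (markovLeftShift a z)]
    rfl

private theorem tau_lower {X : Type*} (f : X → X) (z : X) (U : Set X) (q : ℕ) (hq : 1 ≤ q)
    (H : ∀ T : ℕ, ∃ s L : ℕ, T ≤ L * q ∧ s + 1 ≤ L * q ∧ ∀ l ≤ L, f^[s + l * q] z ∈ U) :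
    (1 : ℝ≥0∞) / (2 * q) ≤ tauOrbit f z U := by
  apply le_limsup_of_frequently_le'
  rw [Filter.frequently_atTop]
  intro T
  obtain ⟨s, L, hT, hsL, hvis⟩ := H T
  set n := s + L * q + 1 with hn
  refine ⟨n, by omega, ?_⟩
  have hTset : ∀ l ∈ Finset.range (L + 1), s + l * q ∈ Finset.range n := by
    intro l hl
    rw [Finset.mem_range] at hl ⊢
    have : l * q ≤ L * q := Nat.mul_le_mul_right _ (by omega)
    omega
  have hinj : ∀ l₁ ∈ Finset.range (L + 1), ∀ l₂ ∈ Finset.range (L + 1),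
      s + l₁ * q = s + l₂ * q → l₁ = l₂ := by
    intro l₁ _ l₂ _ h
    have : l₁ * q = l₂ * q := by omega
    exact Nat.eq_of_mul_eq_mul_right (by omega) this
  have hcard : ((Finset.range (L + 1)).image (fun l => s + l * q)).card = L + 1 := by
    rw [Finset.card_image_of_injOn hinj, Finset.card_range]
  have hsum : ((L : ℝ≥0∞) + 1)
      ≤ ∑ j ∈ Finset.range n, U.indicator (fun _ => (1 : ℝ≥0∞)) (f^[j] z) := by
    calc ((L : ℝ≥0∞) + 1)
        = ∑ j ∈ (Finset.range (L + 1)).image (fun l => s + l * q), 1 := by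
          rw [Finset.sum_const, hcard]; simp [mul_comm]
      _ = ∑ j ∈ (Finset.range (L + 1)).image (fun l => s + l * q),
            U.indicator (fun _ => (1 : ℝ≥0∞)) (f^[j] z) := by
          apply Finset.sum_congr rfl
          intro j hj
          obtain ⟨l, hl, rfl⟩ := Finset.mem_image.1 hj
          rw [Set.indicator_of_mem (hvis l (by have := Finset.mem_range.1 hl; omega))]
      _ ≤ _ := by
          apply Finset.sum_le_sum_of_subset
          intro j hj
          obtain ⟨l, hl, rfl⟩ := Finset.mem_image.1 hj
          exact hTset l hl
  calc (1 : ℝ≥0∞) / (2 * q)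
      = ((L : ℝ≥0∞) + 1) / (((L : ℝ≥0∞) + 1) * (2 * q)) := by
        have h := ENNReal.mul_div_mul_left (c := (L : ℝ≥0∞) + 1) 1 (2 * (q : ℝ≥0∞))
          (by simp) (by simp)
        rw [mul_one] at h
        exact h.symm
    _ ≤ ((L : ℝ≥0∞) + 1) / (n : ℝ≥0∞) := by
        apply ENNReal.div_le_div le_rfl
        have hnle : (n : ℕ) ≤ (L + 1) * (2 * q) := by nlinarith
        calc (n : ℝ≥0∞) ≤ ((L + 1) * (2 * q) : ℕ) := by exact_mod_cast Nat.cast_le.2 hnle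
          _ = ((L : ℝ≥0∞) + 1) * (2 * q) := by push_cast; ring
    _ ≤ _ := ENNReal.div_le_div hsum le_rfl

end Tau

section AuxMain

variable {S : Type*} [TopologicalSpace S] [DiscreteTopology S] {a : S → S → Prop}

set_option maxHeartbeats 2000000 in
private theorem aux_requirement {N : ℕ} (hN : 1 ≤ N) (conn : S → S → ℕ → S)
    (h0 : ∀ b c, conn b c 0 = b) (hNe : ∀ b c, conn b c N = c)
    (hadm : ∀ b c, ∀ i < N, a (conn b c i) (conn b c (i + 1)))
    {b c : S} (hbc : b ≠ c)
    (x : MarkovShift a) (n m : ℕ) :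
    ∃ G : ℕ → Set (MarkovShift a),
      (∀ t, IsOpen (G t) ∧ Dense (G t)) ∧
      ∀ z : MarkovShift a, (∀ t, z ∈ G t) →
        ∀ A : Set (MarkovShift a), (∀ y : MarkovShift a, (∀ i ≤ n, y.1 i = x.1 i) → y ∈ A) →
          (m : ℝ≥0∞) ≤ nuFun (markovLeftShift a) z A := by
  classical
  obtain ⟨j, hj1, hj2⟩ := exists_exp_ge (2 * m * (n + N)) (2 * m * N)
  set q := n + j * N + N with hq
  have hq1 : 1 ≤ q := by omega
  set εf : (Fin j → Bool) → ℕ → S :=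
    fun γ i => if h : i < j then (if γ ⟨i, h⟩ then b else c) else b with hεf
  have hP : ∀ γ : Fin j → Bool, ∃ p : ℕ → S, (∀ i, a (p i) (p (i + 1))) ∧
      (∀ i ≤ n, p i = x.1 i) ∧ (∀ i < j, p (n + (i + 1) * N) = εf γ i) ∧
      (∀ l i, p (l * q + i) = p i) :=
    fun γ => exists_periodic_point hN conn h0 hNe hadm x.1 x.2 n j (εf γ)
  choose p hpadm hppre hpbr hpper using hP
  set K := n + j * N with hK
  have hcont : ∀ i : ℕ, Continuous fun z : MarkovShift a => z.1 i :=
    fun i => (continuous_apply i).comp continuous_subtype_val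
  refine ⟨fun t => ⋂ γ : Fin j → Bool, ⋃ s : ℕ, ⋃ L : ℕ, ⋃ (_ : s + 1 ≤ L * q ∧ t ≤ L * q),
      ⋂ i ∈ Finset.range (L * q + t + 1), {z : MarkovShift a | z.1 (s + i) = p γ i},
    fun t => ⟨?_, ?_⟩, ?_⟩
  · -- open
    apply isOpen_iInter_of_finite
    intro γ
    apply isOpen_iUnion; intro s
    apply isOpen_iUnion; intro L
    apply isOpen_iUnion; intro _
    apply isOpen_biInter_finset
    intro i _
    exact (isOpen_discrete {p γ i}).preimage (hcont (s + i))
  · -- dense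
    rw [dense_iff_inter_open]
    rintro U hU ⟨y₀, hy₀⟩
    obtain ⟨ε, hε, hball⟩ := Metric.isOpen_iff.1 hU y₀ hy₀
    obtain ⟨n₀, hn₀⟩ := exists_pow_lt_of_lt_one hε (by norm_num : (1 / 2 : ℝ) < 1)
    set lst := (Finset.univ : Finset (Fin j → Bool)).toList.map p with hlst
    have hlstadm : ∀ p' ∈ lst, ∀ i, a (p' i) (p' (i + 1)) := by
      intro p' hp'
      obtain ⟨γ, _, rfl⟩ := List.mem_map.1 hp'
      exact hpadm γ
    obtain ⟨zf, hzadm, hzpre, hzw⟩ := exists_multi_splice hN conn h0 hNe hadm t q hq1 lst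
      hlstadm y₀.1 y₀.2 (n₀ + 1) (by omega)
    refine ⟨⟨zf, hzadm⟩, ?_, ?_⟩
    · apply hball
      show dist zf y₀.1 < ε
      have hcyl : zf ∈ PiNat.cylinder y₀.1 (n₀ + 1) := PiNat.mem_cylinder_iff.2 hzpre
      calc dist zf y₀.1 ≤ (1 / 2) ^ (n₀ + 1) := PiNat.mem_cylinder_iff_dist_le.1 hcyl
        _ ≤ (1 / 2) ^ n₀ := pow_le_pow_of_le_one (by norm_num) (by norm_num) (Nat.le_succ _)
        _ < ε := hn₀
    · refine mem_iInter.2 ?_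
      intro γ
      have hpl : p γ ∈ lst := List.mem_map.2 ⟨γ, by simp, rfl⟩
      obtain ⟨s, L, h1, h2, h3⟩ := hzw (p γ) hpl
      refine mem_iUnion.2 ⟨s, mem_iUnion.2 ⟨L, mem_iUnion.2 ⟨⟨h1, h2⟩, ?_⟩⟩⟩
      refine mem_iInter₂.2 ?_
      intro i hi
      rw [Finset.mem_range] at hi
      exact h3 i (by omega)
  · -- wildness
    intro z hz A hA
    have hsep : ∀ γ γ' : Fin j → Bool, (∀ i ≤ K, p γ i = p γ' i) → γ = γ' := by
      intro γ γ' h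
      funext i0
      have hd : n + (i0.1 + 1) * N ≤ K := by
        have : (i0.1 + 1) * N ≤ j * N := Nat.mul_le_mul_right _ (by omega)
        omega
      have e1 := hpbr γ i0.1 i0.2
      have e2 := hpbr γ' i0.1 i0.2
      have e3 : εf γ i0.1 = εf γ' i0.1 := by rw [← e1, ← e2, h _ hd]
      simp only [hεf, dif_pos i0.2, Fin.eta] at e3
      cases hb1 : γ i0 <;> cases hb2 : γ' i0 <;> simp_all
    have hstep : (m : ℝ≥0∞) ≤ nuAux (markovLeftShift a) z ((1 / 2) ^ (K + 1)) A := by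
      unfold nuAux
      refine le_iInf fun I => le_iInf fun hcov => le_iInf fun hopen => le_iInf fun hdiam => ?_
      have hpA : ∀ γ, (⟨p γ, hpadm γ⟩ : MarkovShift a) ∈ A := fun γ => hA _ (hppre γ)
      have hIdx : ∀ γ, ∃ ℓ, (⟨p γ, hpadm γ⟩ : MarkovShift a) ∈ I ℓ :=
        fun γ => mem_iUnion.1 (hcov (hpA γ))
      choose ℓ hℓ using hIdx
      have hdistvals : ∀ γ γ', ℓ γ = ℓ γ' → ∀ i ≤ K, p γ i = p γ' i := by
        intro γ γ' he i hi
        have h1 : edist (⟨p γ, hpadm γ⟩ : MarkovShift a) (⟨p γ', hpadm γ'⟩ : MarkovShift a)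
            ≤ ENNReal.ofReal ((1 / 2) ^ (K + 1)) :=
          le_trans (EMetric.edist_le_diam_of_mem (hℓ γ) (he ▸ hℓ γ')) (hdiam _)
        have h2 : dist (⟨p γ, hpadm γ⟩ : MarkovShift a) (⟨p γ', hpadm γ'⟩ : MarkovShift a)
            ≤ (1 / 2) ^ (K + 1) := by
          rw [edist_dist] at h1
          exact (ENNReal.ofReal_le_ofReal_iff (by positivity)).1 h1
        have h3 : dist (p γ) (p γ') < (1 / 2) ^ K := by
          calc dist (p γ) (p γ')
              = dist (⟨p γ, hpadm γ⟩ : MarkovShift a) (⟨p γ', hpadm γ'⟩ : MarkovShift a) := rfl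
            _ ≤ (1 / 2) ^ (K + 1) := h2
            _ < (1 / 2) ^ K := by
                rw [pow_succ]
                nlinarith [pow_pos (by norm_num : (0 : ℝ) < 1 / 2) K]
        exact PiNat.apply_eq_of_dist_lt h3 hi
      have hinj : Function.Injective ℓ := fun γ γ' he => hsep _ _ (hdistvals _ _ he)
      have hτ : ∀ γ, (1 : ℝ≥0∞) / (2 * q) ≤ tauOrbit (markovLeftShift a) z (I (ℓ γ)) := by
        intro γ
        apply tau_lower _ _ _ q hq1
        intro T
        obtain ⟨ε, hε, hball⟩ := Metric.isOpen_iff.1 (hopen (ℓ γ)) _ (hℓ γ)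
        obtain ⟨t₀, ht₀⟩ := exists_pow_lt_of_lt_one hε (by norm_num : (1 / 2 : ℝ) < 1)
        have hzG := hz (max T t₀)
        simp only [mem_iInter, mem_iUnion, Finset.mem_range, mem_setOf_eq] at hzG
        obtain ⟨s, L, ⟨hc1, hc2⟩, hmatch⟩ := hzG γ
        refine ⟨s, L, le_trans (le_max_left _ _) hc2, hc1, ?_⟩
        intro l hl
        apply hball
        show dist ((markovLeftShift a)^[s + l * q] z) (⟨p γ, hpadm γ⟩ : MarkovShift a) < ε
        have hagree : ∀ i < t₀ + 1, ((markovLeftShift a)^[s + l * q] z).1 i = p γ i := by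
          intro i hi
          rw [iterate_shift_apply]
          have hidx : l * q + i < L * q + max T t₀ + 1 := by
            have h5 : l * q ≤ L * q := Nat.mul_le_mul_right _ hl
            have h6 : i ≤ max T t₀ := le_trans (by omega) (le_max_right T t₀)
            omega
          have h7 := hmatch (l * q + i) hidx
          rw [show i + (s + l * q) = s + (l * q + i) by ring, h7]
          exact hpper γ l i
        have hcyl : ((markovLeftShift a)^[s + l * q] z).1 ∈ PiNat.cylinder (p γ) (t₀ + 1) :=
          PiNat.mem_cylinder_iff.2 hagree
        calc dist ((markovLeftShift a)^[s + l * q] z) (⟨p γ, hpadm γ⟩ : MarkovShift a)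
            = dist ((markovLeftShift a)^[s + l * q] z).1 (p γ) := rfl
          _ ≤ (1 / 2) ^ (t₀ + 1) := PiNat.mem_cylinder_iff_dist_le.1 hcyl
          _ ≤ (1 / 2) ^ t₀ := pow_le_pow_of_le_one (by norm_num) (by norm_num) (Nat.le_succ _)
          _ < ε := ht₀
      calc (m : ℝ≥0∞) ≤ (2 ^ j : ℝ≥0∞) / (2 * q) := by
            rw [ENNReal.le_div_iff_mul_le (Or.inl (by
              have : (q : ℝ≥0∞) ≠ 0 := Nat.cast_ne_zero.2 (by omega)
              simp [this])) (Or.inl (ENNReal.mul_ne_top (by norm_num) (ENNReal.natCast_ne_top q)))]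
            have hnat : m * (2 * q) ≤ 2 ^ j := by
              have he : m * (2 * q) = 2 * m * (n + N) + 2 * m * N * j := by rw [hq]; ring
              omega
            calc (m : ℝ≥0∞) * (2 * (q : ℝ≥0∞)) = ((m * (2 * q) : ℕ) : ℝ≥0∞) := by push_cast; ring
              _ ≤ ((2 ^ j : ℕ) : ℝ≥0∞) := Nat.cast_le.2 hnat
              _ = (2 ^ j : ℝ≥0∞) := by push_cast; ring
        _ = ∑ γ : Fin j → Bool, (1 : ℝ≥0∞) / (2 * q) := by
            rw [Finset.sum_const, Finset.card_univ]
            have hcard : Fintype.card (Fin j → Bool) = 2 ^ j := by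
              simp [Fintype.card_fun]
            rw [hcard, nsmul_eq_mul]
            push_cast
            rw [mul_one_div]
        _ ≤ ∑ γ : Fin j → Bool, tauOrbit (markovLeftShift a) z (I (ℓ γ)) :=
            Finset.sum_le_sum fun γ _ => hτ γ
        _ = ∑ i ∈ Finset.univ.image ℓ, tauOrbit (markovLeftShift a) z (I i) :=
            (Finset.sum_image (f := fun i => tauOrbit (markovLeftShift a) z (I i)) (g := ℓ)
              fun γ _ γ' _ h => hinj h).symm
        _ ≤ ∑' i, tauOrbit (markovLeftShift a) z (I i) := ENNReal.sum_le_tsum _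
    calc (m : ℝ≥0∞) ≤ nuAux (markovLeftShift a) z ((1 / 2) ^ (K + 1)) A := hstep
      _ ≤ nuFun (markovLeftShift a) z A := by
          unfold nuFun
          exact le_iSup₂ (f := fun r (_ : 0 < r) => nuAux (markovLeftShift a) z r A)
            ((1 / 2 : ℝ) ^ (K + 1)) (by positivity)

end AuxMain

set_option maxHeartbeats 1000000 in
/-- In every mixing topological Markov chain over a countable alphabet with at least two
symbols and aperiodic incidence matrix, the set of wild historic points of the shift is
residual: it contains a countable intersection of open dense subsets. -/
theorem wild_historic_residual_markov
    {S : Type*} [TopologicalSpace S] [DiscreteTopology S] [Countable S] [Nontrivial S]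
    (a : S → S → Prop) (haper : MarkovAperiodic a)
    (η : MarkovShift a → Measure (MarkovShift a))
    (hη : ∀ z : MarkovShift a, ∀ E : Set (MarkovShift a), MeasurableSet E →
      η z E = nuFun (markovLeftShift a) z E) :
    ∃ G : ℕ → Set (MarkovShift a),
      (∀ n, IsOpen (G n) ∧ Dense (G n)) ∧
      (⋂ n, G n) ⊆
        {z : MarkovShift a | ∀ A : Set (MarkovShift a), IsOpen A → A.Nonempty → η z A = ∞} := by
  classical
  obtain ⟨N, hN, hpaths⟩ := haper
  choose conn h0 hNe hadm using hpaths
  obtain ⟨b, c, hbc⟩ := exists_pair_ne S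
  have AUX := fun (x : MarkovShift a) (n m : ℕ) =>
    aux_requirement hN conn h0 hNe hadm hbc x n m
  choose GG hGG1 hGG2 using AUX
  haveI : Nonempty ((Σ k : ℕ, (Fin (k + 1) → S)) × ℕ × ℕ) := ⟨⟨⟨0, fun _ => b⟩, 0, 0⟩⟩
  obtain ⟨f, hf⟩ := exists_surjective_nat ((Σ k : ℕ, (Fin (k + 1) → S)) × ℕ × ℕ)
  set D : ((Σ k : ℕ, (Fin (k + 1) → S)) × ℕ × ℕ) → Set (MarkovShift a) := fun idx =>
    if h : ∃ x : MarkovShift a, ∀ i : Fin (idx.1.1 + 1), x.1 i.1 = idx.1.2 i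
    then GG h.choose idx.1.1 idx.2.1 idx.2.2
    else univ with hD
  refine ⟨fun k => D (f k), ?_, ?_⟩
  · intro k
    rw [hD]
    beta_reduce
    by_cases h : ∃ x : MarkovShift a, ∀ i : Fin ((f k).1.1 + 1), x.1 i.1 = (f k).1.2 i
    · rw [dif_pos h]
      exact hGG1 h.choose (f k).1.1 (f k).2.1 (f k).2.2
    · rw [dif_neg h]
      exact ⟨isOpen_univ, dense_univ⟩
  · intro z hz
    simp only [mem_iInter] at hz
    have hzD : ∀ idx, z ∈ D idx := by
      intro idx
      obtain ⟨k, rfl⟩ := hf idx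
      exact hz k
    rintro A hAopen ⟨y, hy⟩
    obtain ⟨ε, hε, hball⟩ := Metric.isOpen_iff.1 hAopen y hy
    obtain ⟨n₀, hn₀⟩ := exists_pow_lt_of_lt_one hε (by norm_num : (1 / 2 : ℝ) < 1)
    have hcylA : ∀ y' : MarkovShift a, (∀ i ≤ n₀, y'.1 i = y.1 i) → y' ∈ A := by
      intro y' hy'
      apply hball
      show dist y'.1 y.1 < ε
      have hc : y'.1 ∈ PiNat.cylinder y.1 (n₀ + 1) :=
        PiNat.mem_cylinder_iff.2 fun i hi => hy' i (by omega)
      calc dist y'.1 y.1 ≤ (1 / 2) ^ (n₀ + 1) := PiNat.mem_cylinder_iff_dist_le.1 hc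
        _ ≤ (1 / 2) ^ n₀ := pow_le_pow_of_le_one (by norm_num) (by norm_num) (Nat.le_succ _)
        _ < ε := hn₀
    rw [hη z A hAopen.measurableSet]
    by_contra hne
    obtain ⟨m, hm⟩ := ENNReal.exists_nat_gt hne
    set w : Fin (n₀ + 1) → S := fun i => y.1 i.1 with hw'
    have hw : ∃ x : MarkovShift a, ∀ i : Fin (n₀ + 1), x.1 i.1 = w i := ⟨y, fun i => rfl⟩
    have hzG : ∀ t, z ∈ GG hw.choose n₀ m t := by
      intro t
      have hmem := hzD ⟨⟨n₀, w⟩, m, t⟩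
      rw [hD] at hmem
      have hmem' : z ∈ (if h : ∃ x : MarkovShift a, ∀ i : Fin (n₀ + 1), x.1 i.1 = w i
          then GG h.choose n₀ m t else univ) := hmem
      rwa [dif_pos hw] at hmem'
    have hle := hGG2 hw.choose n₀ m z hzG A ?_
    · exact absurd hm (not_lt.2 hle)
    · intro y' hy'
      apply hcylA
      intro i hi
      rw [hy' i hi, hw.choose_spec ⟨i, by omega⟩]
end

section
/- Let (𝕏,σ) be a mixing topological Markov chain. Every point x∈𝕏 with maximal oscillation, i.e. such that every σ-invariant Borel probability measure on 𝕏 is a weak* accumulation point of the sequence of empirical measures (1/n)∑_{j=0}^{n−1}δ_{σ^j(x)}, is a wild historic point: η_x(A)=+∞ for every nonempty open set A⊆𝕏. -/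
open MeasureTheory Filter Set Topology
open scoped ENNReal

/-- The empirical probability measure `(1/n)∑_{j<n} δ_{σ^j x}` (here with `n` replaced by
`n+1` so that it is a probability measure for every index). -/
noncomputable def empiricalProb {M : Type*} [MeasurableSpace M] (σ : M → M) (x : M)
    (n : ℕ) : ProbabilityMeasure M :=
  ⟨((n + 1 : ℝ≥0∞))⁻¹ • ∑ j ∈ Finset.range (n + 1), MeasureTheory.Measure.dirac (σ^[j] x), by
    constructor
    rw [MeasureTheory.Measure.smul_apply, MeasureTheory.Measure.finset_sum_apply]
    simp only [MeasureTheory.measure_univ, Finset.sum_const, Finset.card_range,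
      nsmul_eq_mul, mul_one, smul_eq_mul, Nat.cast_add, Nat.cast_one]
    exact ENNReal.inv_mul_cancel (by simp) (by simp)⟩

lemma markovLeftShift_continuous {S : Type*} [TopologicalSpace S] [DiscreteTopology S]
    (a : S → S → Prop) : Continuous (markovLeftShift a) := by
  apply Continuous.subtype_mk
  exact (continuous_pi fun i => (continuous_apply (i + 1)).comp continuous_subtype_val)

lemma shift_iter_apply {S : Type*} (a : S → S → Prop) (n : ℕ) (y : MarkovShift a) (i : ℕ) :
    ((markovLeftShift a)^[n] y).1 i = y.1 (i + n) := by
  induction n generalizing y i with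
  | zero => rfl
  | succ n ih =>
    rw [Function.iterate_succ_apply, ih]
    show y.1 (i + n + 1) = y.1 (i + (n + 1))
    ring_nf

lemma exists_periodic_family {S : Type*} (a : S → S → Prop)
    (N : ℕ) (hN : 1 ≤ N)
    (path : S → S → ℕ → S) (hp0 : ∀ b c, path b c 0 = b) (hpN : ∀ b c, path b c N = c)
    (hpa : ∀ b c i, i < N → a (path b c i) (path b c (i + 1)))
    (β γ : S) (hβγ : β ≠ γ)
    (z : MarkovShift a) (L m : ℕ) (hL : 1 ≤ L) (hm : 1 ≤ m) :
    ∃ Q : (Fin m → Bool) → MarkovShift a,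
      (∀ v, ∀ i < L, (Q v).1 i = z.1 i) ∧
      (∀ v, (markovLeftShift a)^[(L - 1) + (m + 1) * N] (Q v) = Q v) ∧
      (∀ v w : Fin m → Bool, v ≠ w →
        ∃ p < (L - 1) + (m + 1) * N, (Q v).1 p ≠ (Q w).1 p) := by
  set P := (L - 1) + (m + 1) * N with hPdef
  have hNm : 2 ≤ (m + 1) * N := by
    calc 2 = 2 * 1 := by norm_num
    _ ≤ (m + 1) * N := Nat.mul_le_mul (by omega) hN
  have hLP : L + 1 ≤ P := by omega
  let anch : (Fin m → Bool) → ℕ → S := fun v j =>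
    if j = 0 then z.1 (L - 1)
    else if h : j ≤ m then (if v ⟨j - 1, by omega⟩ then β else γ) else z.1 0
  let seg : (Fin m → Bool) → ℕ → S := fun v i =>
    path (anch v ((i - L) / N)) (anch v ((i - L) / N + 1)) (i + 1 - L - ((i - L) / N) * N)
  let c : (Fin m → Bool) → ℕ → S := fun v i => if i < L then z.1 i else seg v i
  have hanch0 : ∀ v, anch v 0 = z.1 (L - 1) := by
    intro v; simp only [anch, if_pos rfl]
  -- segment normal form
  have hseg : ∀ v j t, t ≤ N → seg v (L - 1 + j * N + t) =
      if t = 0 then anch v j else path (anch v j) (anch v (j + 1)) t := by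
    intro v j t ht
    rcases Nat.eq_zero_or_pos t with rfl | htpos
    · rw [if_pos rfl]
      rcases Nat.eq_zero_or_pos j with rfl | hjpos
      · have e0 : L - 1 + 0 * N + 0 = L - 1 := by
          rw [Nat.zero_mul]
          omega
        rw [e0]
        simp only [seg]
        have e1 : L - 1 - L = 0 := by omega
        have e2 : L - 1 + 1 - L = 0 := by omega
        rw [e1, e2, Nat.zero_div, Nat.zero_mul, Nat.sub_zero]
        rw [hp0, hanch0]
      · obtain ⟨j', rfl⟩ : ∃ j', j = j' + 1 := ⟨j - 1, by omega⟩
        simp only [seg]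
        have hmul : (j' + 1) * N = j' * N + N := by ring
        have e1 : L - 1 + (j' + 1) * N + 0 - L = N - 1 + j' * N := by omega
        have e2 : L - 1 + (j' + 1) * N + 0 + 1 - L = N + j' * N := by omega
        rw [e1, e2, Nat.add_mul_div_right _ _ (by omega : 0 < N),
          Nat.div_eq_of_lt (by omega : N - 1 < N), Nat.zero_add, Nat.add_sub_cancel]
        exact hpN _ _
    · rw [if_neg (by omega : ¬ t = 0)]
      obtain ⟨t', rfl⟩ : ∃ t', t = t' + 1 := ⟨t - 1, by omega⟩
      simp only [seg]
      have e1 : L - 1 + j * N + (t' + 1) - L = t' + j * N := by omega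
      have e2 : L - 1 + j * N + (t' + 1) + 1 - L = (t' + 1) + j * N := by omega
      rw [e1, e2, Nat.add_mul_div_right _ _ (by omega : 0 < N),
        Nat.div_eq_of_lt (by omega : t' < N), Nat.zero_add, Nat.add_sub_cancel]
  -- normal form for c
  have hc : ∀ v j t, t ≤ N → c v (L - 1 + j * N + t) =
      if t = 0 then anch v j else path (anch v j) (anch v (j + 1)) t := by
    intro v j t ht
    by_cases hlt : L - 1 + j * N + t < L
    · have ht0 : t = 0 := by omega
      have hj : j * N = 0 := by omega
      subst ht0
      rw [if_pos rfl]
      have hj0 : j = 0 := by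
        rcases Nat.mul_eq_zero.mp hj with h | h
        · exact h
        · omega
      subst hj0
      have e0 : L - 1 + 0 * N + 0 = L - 1 := by rw [Nat.zero_mul]; omega
      rw [e0, hanch0]
      simp only [c]
      rw [if_pos (by omega : L - 1 < L)]
    · simp only [c]
      rw [if_neg hlt]
      exact hseg v j t ht
  -- adjacency
  have hadj : ∀ v i, a (c v i) (c v (i + 1)) := by
    intro v i
    by_cases hiL : i + 1 < L
    · simp only [c]
      rw [if_pos hiL, if_pos (by omega : i < L)]
      exact z.2 i
    · have hk : ∃ j t, t < N ∧ i = L - 1 + j * N + t := by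
        refine ⟨(i + 1 - L) / N, (i + 1 - L) % N, Nat.mod_lt _ (by omega), ?_⟩
        have h1 := Nat.div_add_mod (i + 1 - L) N
        have h2 : (i + 1 - L) / N * N = N * ((i + 1 - L) / N) := Nat.mul_comm _ _
        omega
      obtain ⟨j, t, htN, rfl⟩ := hk
      have h1 : c v (L - 1 + j * N + t) =
          if t = 0 then anch v j else path (anch v j) (anch v (j + 1)) t := hc v j t htN.le
      have h2 := hc v j (t + 1) (by omega)
      rw [if_neg (by omega : ¬ t + 1 = 0), ← Nat.add_assoc] at h2
      rw [h1, h2]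
      rcases Nat.eq_zero_or_pos t with rfl | htpos
      · rw [if_pos rfl]
        have h3 := hpa (anch v j) (anch v (j + 1)) 0 (by omega)
        rwa [hp0] at h3
      · rw [if_neg (by omega : ¬ t = 0)]
        exact hpa _ _ t htN
  -- wrap-around
  have hwrap : ∀ v, c v P = c v 0 := by
    intro v
    have h1 := hc v (m + 1) 0 (by omega)
    rw [if_pos rfl, Nat.add_zero] at h1
    have h2 : anch v (m + 1) = z.1 0 := by
      simp only [anch]
      rw [if_neg (by omega : ¬ m + 1 = 0), dif_neg (by omega : ¬ m + 1 ≤ m)]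
    have h3 : c v 0 = z.1 0 := by
      simp only [c]
      rw [if_pos (by omega : 0 < L)]
    rw [hPdef]
    rw [h1, h2, h3]
  have hP2 : 2 ≤ P := by omega
  have adm : ∀ v i, a (c v (i % P)) (c v ((i + 1) % P)) := by
    intro v i
    have hiP : i % P < P := Nat.mod_lt _ (by omega)
    have h1P : 1 % P = 1 := Nat.mod_eq_of_lt (by omega)
    have hmod : (i + 1) % P = (i % P + 1) % P := by
      rw [Nat.add_mod, h1P]
    by_cases hcase : i % P + 1 = P
    · have hz : (i + 1) % P = 0 := by rw [hmod, hcase, Nat.mod_self]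
      have hgoal := hadj v (i % P)
      rw [hcase, hwrap] at hgoal
      rw [hz]
      exact hgoal
    · have hz : (i + 1) % P = i % P + 1 := by
        rw [hmod, Nat.mod_eq_of_lt (by omega)]
      rw [hz]
      exact hadj v (i % P)
  refine ⟨fun v => ⟨fun i => c v (i % P), adm v⟩, ?_, ?_, ?_⟩
  · intro v i hiL
    show c v (i % P) = z.1 i
    rw [Nat.mod_eq_of_lt (by omega : i < P)]
    simp only [c]
    rw [if_pos hiL]
  · intro v
    apply Subtype.ext
    funext i
    refine (shift_iter_apply a P _ i).trans ?_
    show c v ((i + P) % P) = c v (i % P)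
    rw [Nat.add_mod_right]
  · intro v w hvw
    obtain ⟨j0, hj0⟩ := Function.ne_iff.mp hvw
    have hlt : L - 1 + (j0.1 + 1) * N < P := by
      have h1 : (j0.1 + 1) * N ≤ m * N := Nat.mul_le_mul_right _ (by omega)
      have h2 : m * N < (m + 1) * N :=
        (Nat.mul_lt_mul_right (by omega : 0 < N)).mpr (by omega)
      omega
    refine ⟨L - 1 + (j0.1 + 1) * N, hlt, ?_⟩
    have hfin : ∀ (h : j0.1 + 1 - 1 < m), (⟨j0.1 + 1 - 1, h⟩ : Fin m) = j0 := by
      intro h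
      apply Fin.ext
      simp
    have hval : ∀ u : Fin m → Bool, c u (L - 1 + (j0.1 + 1) * N) = if u j0 then β else γ := by
      intro u
      have h1 := hc u (j0.1 + 1) 0 (by omega)
      rw [if_pos rfl, Nat.add_zero] at h1
      rw [h1]
      simp only [anch]
      rw [if_neg (by omega : ¬ j0.1 + 1 = 0), dif_pos (by omega : j0.1 + 1 ≤ m), hfin]
    show c v (_ % P) ≠ c w (_ % P)
    rw [Nat.mod_eq_of_lt hlt, hval v, hval w]
    cases hv : v j0 <;> cases hw : w j0 <;> simp_all
    · exact fun h => hβγ h.symm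

-- empirical measure value on a measurable set
lemma empirical_apply {M : Type*} [MeasurableSpace M] (σ : M → M) (x : M) (n : ℕ)
    {I : Set M} (hI : MeasurableSet I) :
    (empiricalProb σ x n).toMeasure I =
      (∑ j ∈ Finset.range (n+1), I.indicator (fun _ => (1 : ℝ≥0∞)) (σ^[j] x)) / ((n+1 : ℕ) : ℝ≥0∞) := by
  show (((n + 1 : ℝ≥0∞))⁻¹ • ∑ j ∈ Finset.range (n + 1), Measure.dirac (σ^[j] x)) I = _
  rw [MeasureTheory.Measure.smul_apply, MeasureTheory.Measure.finset_sum_apply]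
  rw [ENNReal.div_eq_inv_mul]
  push_cast
  congr 1
  refine Finset.sum_congr rfl fun j _ => ?_
  rw [MeasureTheory.Measure.dirac_apply' _ hI]
  rfl


lemma tau_ge_of_clusterPt {M : Type*} [MeasurableSpace M] [PseudoEMetricSpace M]
    [OpensMeasurableSpace M] [HasOuterApproxClosed M]
    (σ : M → M) (x : M) (μ : ProbabilityMeasure M)
    (hcl : MapClusterPt μ Filter.atTop (empiricalProb σ x))
    {I : Set M} (hI : IsOpen I) :
    μ.toMeasure I ≤ tauOrbit σ x I := by
  set F := Filter.map (empiricalProb σ x) atTop with hF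
  set G := 𝓝 μ ⊓ F with hG
  haveI : G.NeBot := hcl
  have h1 : Tendsto (id : ProbabilityMeasure M → ProbabilityMeasure M) G (𝓝 μ) :=
    tendsto_id.mono_left inf_le_left
  have h2 : μ.toMeasure I ≤ G.liminf fun ν : ProbabilityMeasure M => ν.toMeasure I :=
    ProbabilityMeasure.le_liminf_measure_open_of_tendsto h1 hI
  have h3 : G.liminf (fun ν : ProbabilityMeasure M => ν.toMeasure I) ≤
      G.limsup (fun ν : ProbabilityMeasure M => ν.toMeasure I) := liminf_le_limsup
  have h4 : G.limsup (fun ν : ProbabilityMeasure M => ν.toMeasure I) ≤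
      F.limsup (fun ν : ProbabilityMeasure M => ν.toMeasure I) :=
    limsup_le_limsup_of_le inf_le_right
  have h5 : F.limsup (fun ν : ProbabilityMeasure M => ν.toMeasure I) =
      atTop.limsup (fun n => (empiricalProb σ x n).toMeasure I) :=
    (limsup_comp (fun ν : ProbabilityMeasure M => ν.toMeasure I) (empiricalProb σ x) atTop).symm
  have h6 : atTop.limsup (fun n => (empiricalProb σ x n).toMeasure I) ≤ tauOrbit σ x I := by
    have he : (fun n : ℕ => (empiricalProb σ x n).toMeasure I) =
        ((fun n : ℕ => (∑ j ∈ Finset.range n, I.indicator (fun _ => (1 : ℝ≥0∞)) (σ^[j] x)) / (n : ℝ≥0∞)) ∘ (fun n => n + 1)) := by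
      funext n
      rw [Function.comp_apply, empirical_apply σ x n hI.measurableSet]
    rw [he, limsup_comp, map_add_atTop_eq_nat]
    exact le_rfl
  exact h2.trans (h3.trans (h4.trans (h5.trans_le h6)))

noncomputable def orbitProb {M : Type*} [MeasurableSpace M] (σ : M → M) (q : M) (P : ℕ)
    (hP : P ≠ 0) : ProbabilityMeasure M :=
  ⟨((P : ℝ≥0∞))⁻¹ • ∑ j ∈ Finset.range P, MeasureTheory.Measure.dirac (σ^[j] q), by
    constructor
    rw [MeasureTheory.Measure.smul_apply, MeasureTheory.Measure.finset_sum_apply]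
    simp only [MeasureTheory.measure_univ, Finset.sum_const, Finset.card_range,
      nsmul_eq_mul, mul_one, smul_eq_mul]
    exact ENNReal.inv_mul_cancel (by simpa using hP) (by simp)⟩

lemma orbitProb_apply {M : Type*} [MeasurableSpace M] (σ : M → M) (q : M) (P : ℕ)
    (hP : P ≠ 0) (E : Set M) :
    (orbitProb σ q P hP).toMeasure E =
      ((P : ℝ≥0∞))⁻¹ * ∑ j ∈ Finset.range P, MeasureTheory.Measure.dirac (σ^[j] q) E := by
  show (((P : ℝ≥0∞))⁻¹ • (∑ j ∈ Finset.range P, Measure.dirac (σ^[j] q) : Measure M)) E = _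
  rw [MeasureTheory.Measure.smul_apply, MeasureTheory.Measure.finset_sum_apply]
  rfl

lemma orbitProb_invariant {M : Type*} [MeasurableSpace M] {σ : M → M} (hσ : Measurable σ)
    {q : M} {P : ℕ} (hP : P ≠ 0) (hq : σ^[P] q = q)
    {E : Set M} (hE : MeasurableSet E) :
    (orbitProb σ q P hP).toMeasure (σ ⁻¹' E) = (orbitProb σ q P hP).toMeasure E := by
  rw [orbitProb_apply, orbitProb_apply]
  congr 1
  have key : ∀ j : ℕ, Measure.dirac (σ^[j] q) (σ ⁻¹' E) = Measure.dirac (σ^[j+1] q) E := by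
    intro j
    rw [Measure.dirac_apply' _ (hσ hE), Measure.dirac_apply' _ hE]
    have : σ (σ^[j] q) = σ^[j+1] q := (Function.iterate_succ_apply' σ j q).symm
    by_cases h : σ^[j] q ∈ σ ⁻¹' E
    · rw [Set.indicator_of_mem h, Set.indicator_of_mem (by rw [← this]; exact h)]
      rfl
    · rw [Set.indicator_of_notMem h, Set.indicator_of_notMem (by rw [← this]; exact h)]
  have := Finset.sum_congr rfl (fun j (_ : j ∈ Finset.range P) => key j)
  rw [this]
  set f : ℕ → ℝ≥0∞ := fun j => Measure.dirac (σ^[j] q) E with hf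
  have h1 : ∑ j ∈ Finset.range (P + 1), f j = (∑ j ∈ Finset.range P, f (j + 1)) + f 0 :=
    Finset.sum_range_succ' f P
  have h2 : ∑ j ∈ Finset.range (P + 1), f j = (∑ j ∈ Finset.range P, f j) + f P :=
    Finset.sum_range_succ f P
  have hfP : f P = f 0 := by simp only [hf, hq, Function.iterate_zero_apply]
  have hfin : f 0 ≠ ∞ := (measure_ne_top _ _)
  have := h1.symm.trans h2
  rw [hfP] at this
  exact WithTop.add_right_cancel hfin this
  
lemma orbitProb_atom {M : Type*} [MeasurableSpace M] (σ : M → M) (q : M) (P : ℕ)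
    (hP : P ≠ 0) :
    ((P : ℝ≥0∞))⁻¹ ≤ (orbitProb σ q P hP).toMeasure {q} := by
  rw [orbitProb_apply]
  have h0 : Measure.dirac (σ^[0] q) {q} = 1 := by
    rw [Function.iterate_zero_apply]
    exact Measure.dirac_apply_of_mem rfl
  calc ((P : ℝ≥0∞))⁻¹ = ((P : ℝ≥0∞))⁻¹ * Measure.dirac (σ^[0] q) {q} := by rw [h0, mul_one]
  _ ≤ _ := by
      refine mul_le_mul_right ?_ _
      exact Finset.single_le_sum (f := fun j => Measure.dirac (σ^[j] q) ({q} : Set M)) (fun j _ => zero_le)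
        (Finset.mem_range.mpr (Nat.pos_of_ne_zero hP))

lemma counting_lemma (K L N : ℕ) (hN : 1 ≤ N) :
    ∃ m, 1 ≤ m ∧ K * ((L - 1) + (m + 1) * N) ≤ 2 ^ m := by
  set C := K * (L + N) with hC
  refine ⟨4 * C + 2, by omega, ?_⟩
  set m := 4 * C + 2 with hm
  have step1 : K * ((L - 1) + (m + 1) * N) ≤ C * (m + 1) := by
    have h1 : (L - 1) + (m + 1) * N ≤ (L + N) * (m + 1) := by
      have : (m + 1) * N = N * (m + 1) := Nat.mul_comm _ _
      have h2 : L ≤ L * (m + 1) := Nat.le_mul_of_pos_right _ (by omega)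
      have h3 : (L + N) * (m + 1) = L * (m + 1) + N * (m + 1) := by ring
      omega
    calc K * ((L - 1) + (m + 1) * N) ≤ K * ((L + N) * (m + 1)) := Nat.mul_le_mul_left _ h1
    _ = C * (m + 1) := by rw [hC]; ring
  refine step1.trans ?_
  have hpow : ∀ k : ℕ, k + 1 ≤ 2 ^ k := fun k => Nat.lt_two_pow_self
  have h4 : 2 ^ m = 2 ^ (2 * C + 1) * 2 ^ (2 * C + 1) := by
    rw [← pow_add]; congr 1; omega
  have h5 := hpow (2 * C + 1)
  calc C * (m + 1) ≤ (2 * C + 2) * (2 * C + 2) := by nlinarith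
  _ ≤ 2 ^ (2 * C + 1) * 2 ^ (2 * C + 1) := Nat.mul_le_mul h5 h5
  _ = 2 ^ m := h4.symm

/-- In a mixing topological Markov chain, every point with maximal oscillation (every
shift-invariant Borel probability measure is a weak* accumulation point of its empirical
measures) is a wild historic point. -/
theorem maximal_oscillation_implies_wild_historic
    {S : Type*} [TopologicalSpace S] [DiscreteTopology S] [Countable S] [Nontrivial S]
    (a : S → S → Prop) (haper : MarkovAperiodic a)
    (η : MarkovShift a → Measure (MarkovShift a))
    (hη : ∀ z : MarkovShift a, ∀ E : Set (MarkovShift a), MeasurableSet E →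
      η z E = nuFun (markovLeftShift a) z E)
    (x : MarkovShift a)
    (hosc : ∀ μ : ProbabilityMeasure (MarkovShift a),
      (∀ E : Set (MarkovShift a), MeasurableSet E →
        μ.toMeasure ((markovLeftShift a) ⁻¹' E) = μ.toMeasure E) →
      MapClusterPt μ Filter.atTop (empiricalProb (markovLeftShift a) x)) :
    ∀ A : Set (MarkovShift a), IsOpen A → A.Nonempty → η x A = ∞ := by
  intro A hA hAne
  have hσcont : Continuous (markovLeftShift a) := markovLeftShift_continuous a
  have hσmeas : Measurable (markovLeftShift a) := hσcont.measurable
  have hmain : ∀ K : ℕ, (K : ℝ≥0∞) ≤ nuFun (markovLeftShift a) x A := by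
    intro K
    obtain ⟨z, hz⟩ := hAne
    obtain ⟨N, hN, hpath⟩ := haper
    choose path hp0 hpN hpa using hpath
    obtain ⟨β, γ, hβγ⟩ := exists_pair_ne S
    obtain ⟨ε, hε, hball⟩ := Metric.isOpen_iff.mp hA z hz
    obtain ⟨n0, hn0⟩ : ∃ n : ℕ, (1 / 2 : ℝ) ^ n < ε :=
      exists_pow_lt_of_lt_one hε (by norm_num)
    set L := max n0 1 with hLdef
    have hL : 1 ≤ L := le_max_right _ _
    have hcyl : ∀ y : MarkovShift a, (∀ i < L, y.1 i = z.1 i) → y ∈ A := by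
      intro y hy
      apply hball
      have h1 : dist y.1 z.1 ≤ (1 / 2 : ℝ) ^ L := PiNat.mem_cylinder_iff_dist_le.mp hy
      have h2 : dist y z = dist y.1 z.1 := rfl
      rw [Metric.mem_ball, h2]
      calc dist y.1 z.1 ≤ (1 / 2 : ℝ) ^ L := h1
      _ ≤ (1 / 2 : ℝ) ^ n0 :=
          pow_le_pow_of_le_one (by norm_num) (by norm_num) (le_max_left _ _)
      _ < ε := hn0
    obtain ⟨m, hm1, hcount⟩ := counting_lemma K L N hN
    set P := (L - 1) + (m + 1) * N with hPdef
    have hP2 : 2 ≤ P := by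
      have : 2 * 1 ≤ (m + 1) * N := Nat.mul_le_mul (by omega) hN
      omega
    have hP0 : P ≠ 0 := by omega
    obtain ⟨Q, hQcyl, hQper, hQdiff⟩ :=
      exists_periodic_family a N hN path hp0 hpN hpa β γ hβγ z L m hL hm1
    have hQA : ∀ v, Q v ∈ A := fun v => hcyl _ (hQcyl v)
    set μv : (Fin m → Bool) → ProbabilityMeasure (MarkovShift a) :=
      fun v => orbitProb (markovLeftShift a) (Q v) P hP0 with hμv
    have hμinv : ∀ v E, MeasurableSet E →
        (μv v).toMeasure ((markovLeftShift a) ⁻¹' E) = (μv v).toMeasure E :=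
      fun v E hE => orbitProb_invariant hσmeas hP0 (hQper v) hE
    have hμtau : ∀ v (I : Set (MarkovShift a)), IsOpen I →
        (μv v).toMeasure I ≤ tauOrbit (markovLeftShift a) x I :=
      fun v I hI => tau_ge_of_clusterPt _ x (μv v) (hosc (μv v) (hμinv v)) hI
    have hatom : ∀ v, ((P : ℝ≥0∞))⁻¹ ≤ (μv v).toMeasure {Q v} :=
      fun v => orbitProb_atom _ _ _ hP0
    have hdist : ∀ v w : Fin m → Bool, v ≠ w → (1 / 2 : ℝ) ^ P < dist (Q v) (Q w) := by
      intro v w hvw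
      obtain ⟨p, hpP, hne⟩ := hQdiff v w hvw
      have hQne : (Q v).1 ≠ (Q w).1 := fun h => hne (congrFun h p)
      have hdeq : dist (Q v) (Q w) = (1 / 2 : ℝ) ^ PiNat.firstDiff (Q v).1 (Q w).1 :=
        PiNat.dist_eq_of_ne hQne
      have hfd : PiNat.firstDiff (Q v).1 (Q w).1 ≤ p := by
        by_contra h
        push_neg at h
        exact hne (PiNat.apply_eq_of_lt_firstDiff h)
      rw [hdeq]
      exact pow_lt_pow_right_of_lt_one₀ (by norm_num) (by norm_num) (lt_of_le_of_lt hfd hpP)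
    have hsup : nuAux (markovLeftShift a) x ((1 / 2 : ℝ) ^ P) A ≤
        nuFun (markovLeftShift a) x A :=
      le_iSup₂ (f := fun (r : ℝ) (_ : 0 < r) => nuAux (markovLeftShift a) x r A)
        ((1 / 2 : ℝ) ^ P) (by positivity)
    refine le_trans ?_ hsup
    refine le_iInf fun I => le_iInf fun hcov => le_iInf fun hopen => le_iInf fun hdiam => ?_
    have hsel : ∀ v, ∃ n, Q v ∈ I n := fun v => mem_iUnion.mp (hcov (hQA v))
    choose nv hnv using hsel
    have hinj : Function.Injective nv := by
      intro v w h
      by_contra hvw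
      have h1 : edist (Q v) (Q w) ≤ ENNReal.ofReal ((1 / 2 : ℝ) ^ P) := by
        calc edist (Q v) (Q w) ≤ EMetric.diam (I (nv v)) :=
            EMetric.edist_le_diam_of_mem (hnv v) (h ▸ hnv w)
        _ ≤ _ := hdiam _
      have h2 : dist (Q v) (Q w) ≤ (1 / 2 : ℝ) ^ P := by
        rw [edist_dist] at h1
        exact (ENNReal.ofReal_le_ofReal_iff (by positivity)).mp h1
      exact absurd h2 (not_le.mpr (hdist v w hvw))
    calc (K : ℝ≥0∞) ≤ (2 ^ m : ℝ≥0∞) * ((P : ℝ≥0∞))⁻¹ := by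
          rw [← div_eq_mul_inv, ENNReal.le_div_iff_mul_le (Or.inl (by exact_mod_cast hP0))
            (Or.inl (ENNReal.natCast_ne_top P))]
          calc (K : ℝ≥0∞) * (P : ℝ≥0∞) = ((K * P : ℕ) : ℝ≥0∞) := by push_cast; ring
          _ ≤ ((2 ^ m : ℕ) : ℝ≥0∞) := by exact_mod_cast hcount
          _ = (2 ^ m : ℝ≥0∞) := by push_cast; ring
      _ = ∑ _v : Fin m → Bool, ((P : ℝ≥0∞))⁻¹ := by
          rw [Finset.sum_const, Finset.card_univ, Fintype.card_fun]
          simp only [Fintype.card_bool, Fintype.card_fin, nsmul_eq_mul]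
          push_cast
          ring
      _ ≤ ∑ v : Fin m → Bool, tauOrbit (markovLeftShift a) x (I (nv v)) := by
          refine Finset.sum_le_sum fun v _ => ?_
          calc ((P : ℝ≥0∞))⁻¹ ≤ (μv v).toMeasure {Q v} := hatom v
          _ ≤ (μv v).toMeasure (I (nv v)) :=
              measure_mono (Set.singleton_subset_iff.mpr (hnv v))
          _ ≤ tauOrbit (markovLeftShift a) x (I (nv v)) := hμtau v _ (hopen _)
      _ = ∑ n ∈ Finset.univ.image nv, tauOrbit (markovLeftShift a) x (I n) :=
          (Finset.sum_image (f := fun n => tauOrbit (markovLeftShift a) x (I n))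
            (g := nv) (fun v _ w _ h => hinj h)).symm
      _ ≤ ∑' n, tauOrbit (markovLeftShift a) x (I n) := ENNReal.sum_le_tsum _
  rw [hη x A hA.measurableSet]
  by_contra hne
  obtain ⟨K, hK⟩ := ENNReal.exists_nat_gt hne
  exact absurd (hmain K) (not_le.mpr hK)
end

section
/- For every compact set K⊆𝕏 one has η(K)=0 if and only if lim_{ε→0} τ(B_ε(K))=0. -/
open MeasureTheory Filter Set Topology
open scoped ENNReal

/-- A finitely additive outer probability on `X`: a monotone, finitely subadditive set
function defined on all subsets of `X`, with values in `[0,1]` and total mass `1`. -/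
structure FinAddOuterProb (X : Type*) where
  toFun : Set X → ℝ≥0∞
  mono' : ∀ ⦃A B : Set X⦄, A ⊆ B → toFun A ≤ toFun B
  subadd' : ∀ A B : Set X, toFun (A ∪ B) ≤ toFun A + toFun B
  le_one' : ∀ A : Set X, toFun A ≤ 1
  univ_eq' : toFun Set.univ = 1

/-- The premeasure `τ(A) = limsup_n (1/n) ∑_{j<n} ξ_j(A)`. -/
noncomputable def tauSeq {X : Type*} (ξ : ℕ → FinAddOuterProb X) (A : Set X) : ℝ≥0∞ :=
  Filter.atTop.limsup fun n : ℕ => (∑ j ∈ Finset.range n, (ξ j).toFun A) / (n : ℝ≥0∞)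

/-- `ν_r(Y)`: infimum of `∑_i τ(I_i)` over countable covers of `Y` by open sets of
diameter at most `r`. -/
noncomputable def nuSeqAux {X : Type*} [MetricSpace X] (ξ : ℕ → FinAddOuterProb X) (r : ℝ)
    (Y : Set X) : ℝ≥0∞ :=
  ⨅ (I : ℕ → Set X) (_ : Y ⊆ ⋃ n, I n) (_ : ∀ n, IsOpen (I n))
    (_ : ∀ n, EMetric.diam (I n) ≤ ENNReal.ofReal r), ∑' n, tauSeq ξ (I n)

/-- `ν(Y) = sup_{r>0} ν_r(Y)`, the Carathéodory Method II construction from `τ`. -/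
noncomputable def nuSeq {X : Type*} [MetricSpace X] (ξ : ℕ → FinAddOuterProb X)
    (Y : Set X) : ℝ≥0∞ :=
  ⨆ (r : ℝ) (_ : 0 < r), nuSeqAux ξ r Y

lemma tauSeq_mono {X : Type*} (ξ : ℕ → FinAddOuterProb X) {A B : Set X} (h : A ⊆ B) :
    tauSeq ξ A ≤ tauSeq ξ B := by
  refine Filter.limsup_le_limsup (Filter.Eventually.of_forall fun n => ?_)
    Filter.isCobounded_le_of_bot Filter.isBounded_le_of_top
  exact ENNReal.div_le_div (Finset.sum_le_sum fun j _ => (ξ j).mono' h) le_rfl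

lemma ennreal_limsup_add_le {α : Type*} (f : Filter α) (u v : α → ℝ≥0∞) :
    f.limsup (fun n => u n + v n) ≤ f.limsup u + f.limsup v := by
  by_cases h1 : f.limsup u = ⊤
  · simp [h1]
  by_cases h2 : f.limsup v = ⊤
  · simp [h2]
  refine ENNReal.le_of_forall_pos_le_add fun ε hε _ => ?_
  have hε2 : ((ε : ℝ≥0∞) / 2) ≠ 0 := by
    simp [ENNReal.div_eq_zero_iff, hε.ne']
  have hu : ∀ᶠ n in f, u n < f.limsup u + (ε : ℝ≥0∞) / 2 :=
    Filter.eventually_lt_of_limsup_lt (ENNReal.lt_add_right h1 hε2)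
  have hv : ∀ᶠ n in f, v n < f.limsup v + (ε : ℝ≥0∞) / 2 :=
    Filter.eventually_lt_of_limsup_lt (ENNReal.lt_add_right h2 hε2)
  refine Filter.limsup_le_of_le Filter.isCobounded_le_of_bot ?_
  filter_upwards [hu, hv] with n h1' h2'
  calc u n + v n ≤ (f.limsup u + (ε : ℝ≥0∞) / 2) + (f.limsup v + (ε : ℝ≥0∞) / 2) :=
        add_le_add h1'.le h2'.le
    _ = f.limsup u + f.limsup v + ε := by
        rw [add_add_add_comm, ENNReal.add_halves]

lemma tauSeq_union {X : Type*} (ξ : ℕ → FinAddOuterProb X) (A B : Set X) :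
    tauSeq ξ (A ∪ B) ≤ tauSeq ξ A + tauSeq ξ B := by
  refine le_trans (Filter.limsup_le_limsup (Filter.Eventually.of_forall fun n => ?_)
      Filter.isCobounded_le_of_bot Filter.isBounded_le_of_top)
    (ennreal_limsup_add_le Filter.atTop
      (fun n : ℕ => (∑ j ∈ Finset.range n, (ξ j).toFun A) / (n : ℝ≥0∞))
      (fun n : ℕ => (∑ j ∈ Finset.range n, (ξ j).toFun B) / (n : ℝ≥0∞)))
  rw [← ENNReal.add_div, ← Finset.sum_add_distrib]
  exact ENNReal.div_le_div (Finset.sum_le_sum fun j _ => (ξ j).subadd' A B) le_rfl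

lemma tauSeq_biUnion {X : Type*} (ξ : ℕ → FinAddOuterProb X) {ι : Type*} (s : Finset ι)
    (hs : s.Nonempty) (f : ι → Set X) :
    tauSeq ξ (⋃ i ∈ s, f i) ≤ ∑ i ∈ s, tauSeq ξ (f i) := by
  classical
  revert hs
  induction s using Finset.cons_induction with
  | empty => intro h; simp at h
  | cons i s hi ih =>
      intro _
      rw [Finset.sum_cons, Finset.cons_eq_insert, Finset.set_biUnion_insert]
      rcases s.eq_empty_or_nonempty with rfl | hne
      · simp
      · exact le_trans (tauSeq_union ξ _ _) (add_le_add le_rfl (ih hne))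

/-- For every compact set `K ⊆ 𝕏`, one has `η(K) = 0` if and only if
`lim_{ε→0} τ(B_ε(K)) = 0`. -/
theorem eta_compact_zero_iff
    {X : Type*} [MetricSpace X] [MeasurableSpace X] [BorelSpace X]
    (ξ : ℕ → FinAddOuterProb X)
    (η : Measure X) (hη : ∀ E : Set X, MeasurableSet E → η E = nuSeq ξ E)
    (K : Set X) (hK : IsCompact K) :
    η K = 0 ↔
      Filter.Tendsto (fun ε : ℝ => tauSeq ξ (Metric.thickening ε K))
        (nhdsWithin 0 (Set.Ioi 0)) (nhds 0) := by
  rw [hη K hK.isClosed.measurableSet]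
  constructor
  · -- η K = 0 → tendsto
    intro h0
    have h1 : nuSeqAux ξ 1 K = 0 := by
      refine le_antisymm ?_ zero_le
      rw [← h0]
      exact le_iSup₂ (f := fun r (_ : (0:ℝ) < r) => nuSeqAux ξ r K) 1 one_pos
    rw [ENNReal.tendsto_nhds_zero]
    intro δ hδ
    -- find a cover with small total mass
    have h2 : nuSeqAux ξ 1 K < δ := h1 ▸ hδ
    rw [nuSeqAux] at h2
    simp only [iInf_lt_iff] at h2
    obtain ⟨I, hcov, hopen, _, hsum⟩ := h2
    -- finite subcover
    obtain ⟨t, ht⟩ := hK.elim_finite_subcover I hopen hcov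
    rcases t.eq_empty_or_nonempty with rfl | htne
    · simp only [Finset.notMem_empty, Set.iUnion_of_empty, Set.iUnion_empty,
        Set.subset_empty_iff] at ht
      subst ht
      filter_upwards [self_mem_nhdsWithin] with ε (hε : 0 < ε)
      calc tauSeq ξ (Metric.thickening ε ∅) = tauSeq ξ ∅ := by
            rw [Metric.thickening_empty]
        _ ≤ ∑' n, tauSeq ξ (I n) := by
            refine le_trans (tauSeq_mono ξ (Set.empty_subset (I 0))) ?_
            exact ENNReal.le_tsum 0
        _ ≤ δ := hsum.le
    · obtain ⟨ε₀, hε₀, hsub⟩ := hK.exists_thickening_subset_open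
        (isOpen_biUnion fun i _ => hopen i) ht
      filter_upwards [Ioo_mem_nhdsGT_of_mem (Set.left_mem_Ico.2 hε₀)] with ε hε
      calc tauSeq ξ (Metric.thickening ε K)
          ≤ tauSeq ξ (⋃ i ∈ t, I i) :=
            tauSeq_mono ξ (le_trans (Metric.thickening_mono hε.2.le K) hsub)
        _ ≤ ∑ i ∈ t, tauSeq ξ (I i) := tauSeq_biUnion ξ t htne I
        _ ≤ ∑' n, tauSeq ξ (I n) := ENNReal.sum_le_tsum t
        _ ≤ δ := hsum.le
  · -- tendsto → η K = 0
    intro h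
    have key : ∀ c : ℝ≥0∞, 0 < c → ∃ ε : ℝ, 0 < ε ∧
        tauSeq ξ (Metric.thickening ε K) ≤ c := by
      intro c hc
      have h1 := (ENNReal.tendsto_nhds_zero.1 h c hc).and
        (Ioo_mem_nhdsGT_of_mem (Set.left_mem_Ico.2 one_pos))
      obtain ⟨ε, hε1, hε2⟩ := h1.exists
      exact ⟨ε, hε2.1, hε1⟩
    refine le_antisymm ?_ zero_le
    rw [nuSeq]
    refine iSup₂_le fun r hr => ?_
    refine ENNReal.le_of_forall_pos_le_add fun δ hδ _ => ?_
    rw [zero_add]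
    have hδ' : (0:ℝ≥0∞) < δ := by exact_mod_cast hδ
    have hr3 : (0:ℝ) < r / 3 := by linarith
    rcases Set.eq_empty_or_nonempty K with rfl | hKne
    · -- K empty
      have hτ0 : tauSeq ξ (∅ : Set X) = 0 := by
        refine le_antisymm (le_of_forall_gt_imp_ge_of_dense fun c hc => ?_) zero_le
        obtain ⟨ε', _, hτ'⟩ := key c hc
        rwa [Metric.thickening_empty] at hτ'
      have h2 : nuSeqAux ξ r ∅ ≤ ∑' _ : ℕ, tauSeq ξ (∅ : Set X) := by
        refine iInf₂_le_of_le (fun _ => ∅) (by simp) ?_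
        exact iInf₂_le_of_le (fun _ => isOpen_empty) (fun n => by show Metric.ediam (∅ : Set X) ≤ _; rw [Metric.ediam_empty]; exact zero_le) le_rfl
      refine le_trans h2 ?_
      simp [hτ0]
    · -- K nonempty
      classical
      obtain ⟨s, hsK, hsfin, hscov⟩ := hK.elim_finite_subcover_image
        (fun x (_ : x ∈ K) => Metric.isOpen_ball (x := x) (ε := r / 3))
        (fun x hx => Set.mem_biUnion hx (Metric.mem_ball_self hr3))
      set t : Finset X := hsfin.toFinset with ht
      have htmem : ∀ y, y ∈ t ↔ y ∈ s := fun y => hsfin.mem_toFinset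
      obtain ⟨x₀, hx₀s⟩ : s.Nonempty := by
        rcases hKne with ⟨x, hx⟩
        obtain ⟨y, hy, -⟩ := Set.mem_iUnion₂.1 (hscov hx)
        exact ⟨y, hy⟩
      let c : ℕ → X := fun n => t.toList.getD n x₀
      have hccov : K ⊆ ⋃ n, Metric.ball (c n) (r / 3) := by
        intro x hx
        obtain ⟨y, hy, hxy⟩ := Set.mem_iUnion₂.1 (hscov hx)
        obtain ⟨n, hn, hcn⟩ := List.getElem_of_mem (Finset.mem_toList.2 ((htmem y).2 hy))
        refine Set.mem_iUnion.2 ⟨n, ?_⟩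
        have hcy : c n = y := by simp [c, List.getD, List.getElem?_eq_getElem hn, hcn]
        rwa [hcy]
      have hchoice : ∀ n : ℕ, ∃ ε : ℝ, 0 < ε ∧
          tauSeq ξ (Metric.thickening ε K) ≤ (δ : ℝ≥0∞) * (2 : ℝ≥0∞)⁻¹ ^ (n + 1) := by
        intro n
        refine key _ (ENNReal.mul_pos hδ'.ne' (pow_ne_zero _ (by simp)))
      choose e he hτe using hchoice
      set I : ℕ → Set X := fun n =>
        Metric.ball (c n) (r / 3) ∩ Metric.thickening (e n) K with hI
      have hIcov : K ⊆ ⋃ n, I n := by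
        intro x hx
        obtain ⟨n, hn⟩ := Set.mem_iUnion.1 (hccov hx)
        exact Set.mem_iUnion.2 ⟨n, hn, Metric.self_subset_thickening (he n) K hx⟩
      have hIopen : ∀ n, IsOpen (I n) :=
        fun n => Metric.isOpen_ball.inter Metric.isOpen_thickening
      have hIdiam : ∀ n, EMetric.diam (I n) ≤ ENNReal.ofReal r := by
        intro n
        calc EMetric.diam (I n) ≤ EMetric.diam (Metric.ball (c n) (r / 3)) :=
              EMetric.diam_mono Set.inter_subset_left
          _ ≤ 2 * ENNReal.ofReal (r / 3) := by
              rw [← Metric.emetric_ball]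
              exact EMetric.diam_ball
          _ ≤ ENNReal.ofReal r := by
              have h2 : (2:ℝ≥0∞) = ENNReal.ofReal 2 := by norm_num
              rw [h2, ← ENNReal.ofReal_mul (by norm_num)]
              exact ENNReal.ofReal_le_ofReal (by linarith)
      have hIτ : ∀ n, tauSeq ξ (I n) ≤ (δ : ℝ≥0∞) * (2 : ℝ≥0∞)⁻¹ ^ (n + 1) :=
        fun n => le_trans (tauSeq_mono ξ Set.inter_subset_right) (hτe n)
      have h2 : nuSeqAux ξ r K ≤ ∑' n, tauSeq ξ (I n) := by
        refine iInf₂_le_of_le I hIcov ?_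
        exact iInf₂_le_of_le hIopen hIdiam le_rfl
      refine le_trans h2 ?_
      calc ∑' n, tauSeq ξ (I n) ≤ ∑' n : ℕ, (δ : ℝ≥0∞) * (2 : ℝ≥0∞)⁻¹ ^ (n + 1) :=
            ENNReal.tsum_le_tsum hIτ
        _ ≤ (δ : ℝ≥0∞) := by
            rw [ENNReal.tsum_mul_left]
            have hgeom : ∑' n : ℕ, (2 : ℝ≥0∞)⁻¹ ^ (n + 1)
                = (2 : ℝ≥0∞)⁻¹ * ∑' n : ℕ, (2 : ℝ≥0∞)⁻¹ ^ n := by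
              rw [← ENNReal.tsum_mul_left]
              congr 1 with n
              rw [pow_succ, mul_comm]
            rw [hgeom, ENNReal.tsum_geometric, ENNReal.one_sub_inv_two,
              ENNReal.mul_inv_cancel (by simp) (by simp), mul_one]
end

section
/- Let 𝕏 be a perfect compact metric space and f:𝕏→𝕏 a continuous map. If for some x∈𝕏 the measure η_x is purely atomic with finitely many atoms, then every atom P of η_x is a preperiodic point of f: there exist integers m>n≥0 with f^m(P)=f^n(P). If in addition f is a bijection, then every atom of η_x is a periodic point of f. -/
open MeasureTheory Filter Set Topology
open scoped ENNReal

/- ### Auxiliary lemmas -/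

lemma my_limsup_add_le (u v : ℕ → ℝ≥0∞) :
    atTop.limsup (fun n => u n + v n) ≤ atTop.limsup u + atTop.limsup v := by
  by_cases hu : atTop.limsup u = ⊤
  · simp [hu, top_add]
  by_cases hv : atTop.limsup v = ⊤
  · simp [hv, add_top]
  refine ENNReal.le_of_forall_pos_le_add fun ε hε hlt => ?_
  have h2 : (ε : ℝ≥0∞) = ε/2 + ε/2 := (ENNReal.add_halves _).symm
  have hε2 : (0:ℝ≥0∞) < ε/2 := by
    simp [ENNReal.div_pos_iff, hε.ne']
  have hu' : ∀ᶠ n in atTop, u n < atTop.limsup u + ε/2 :=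
    Filter.eventually_lt_of_limsup_lt (by
      exact ENNReal.lt_add_right hu hε2.ne')
  have hv' : ∀ᶠ n in atTop, v n < atTop.limsup v + ε/2 :=
    Filter.eventually_lt_of_limsup_lt (by
      exact ENNReal.lt_add_right hv hε2.ne')
  refine Filter.limsup_le_of_le (by isBoundedDefault) ?_
  filter_upwards [hu', hv'] with n h1 h2'
  calc u n + v n ≤ (atTop.limsup u + ε/2) + (atTop.limsup v + ε/2) :=
        add_le_add h1.le h2'.le
    _ = atTop.limsup u + atTop.limsup v + ε := by
        rw [add_add_add_comm, ENNReal.add_halves]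

lemma my_limsup_const_div (c : ℝ≥0∞) (hc : c ≠ ⊤) :
    atTop.limsup (fun n : ℕ => c / (n : ℝ≥0∞)) = 0 := by
  have : Tendsto (fun n : ℕ => c / (n : ℝ≥0∞)) atTop (𝓝 (c / ⊤)) :=
    ENNReal.Tendsto.const_div ENNReal.tendsto_nat_nhds_top (Or.inr hc)
  rw [ENNReal.div_top] at this
  exact this.limsup_eq

lemma my_limsup_sum_le {ι : Type*} (s : Finset ι) (a : ι → ℕ → ℝ≥0∞) :
    atTop.limsup (fun n => ∑ i ∈ s, a i n) ≤ ∑ i ∈ s, atTop.limsup (a i) := by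
  classical
  induction s using Finset.cons_induction with
  | empty => simp [Filter.limsup_const]
  | cons b t hb ih =>
      simp only [Finset.sum_cons]
      exact le_trans (my_limsup_add_le _ _) (add_le_add le_rfl ih)

lemma tauOrbit_mono {X : Type*} (f : X → X) (x : X) {A B : Set X} (h : A ⊆ B) :
    tauOrbit f x A ≤ tauOrbit f x B := by
  refine Filter.limsup_le_limsup (Filter.Eventually.of_forall fun n => ?_)
  refine ENNReal.div_le_div (Finset.sum_le_sum fun j _ => ?_) le_rfl
  exact Set.indicator_le_indicator_of_subset h (fun _ => zero_le) _

lemma tauOrbit_empty {X : Type*} (f : X → X) (x : X) : tauOrbit f x (∅ : Set X) = 0 := by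
  have : (fun n : ℕ => (∑ j ∈ Finset.range n,
      (∅ : Set X).indicator (fun _ => (1 : ℝ≥0∞)) (f^[j] x)) / (n : ℝ≥0∞)) = fun _ => 0 := by
    funext n; simp
  rw [tauOrbit, this, Filter.limsup_const]

/-- Shift invariance (one inequality): the preimage under `f^[k]` has no larger
upper visiting frequency. -/
lemma tauOrbit_preimage_le {X : Type*} (f : X → X) (x : X) (A : Set X) (k : ℕ) :
    tauOrbit f x ((f^[k]) ⁻¹' A) ≤ tauOrbit f x A := by
  set h : ℕ → ℝ≥0∞ := fun i => A.indicator (fun _ => (1:ℝ≥0∞)) (f^[i] x) with hh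
  have hb : ∀ i, h i ≤ 1 := fun i => Set.indicator_apply_le fun _ => le_rfl
  have hnum : ∀ n : ℕ, (∑ j ∈ Finset.range n,
      ((f^[k]) ⁻¹' A).indicator (fun _ => (1:ℝ≥0∞)) (f^[j] x))
      ≤ (∑ j ∈ Finset.range n, h j) + k := by
    intro n
    have e1 : ∀ j, ((f^[k]) ⁻¹' A).indicator (fun _ => (1:ℝ≥0∞)) (f^[j] x) = h (k + j) := by
      intro j
      have hx : f^[k + j] x = f^[k] (f^[j] x) := Function.iterate_add_apply f k j x
      show ((f^[k]) ⁻¹' A).indicator (fun _ => (1:ℝ≥0∞)) (f^[j] x)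
          = A.indicator (fun _ => (1:ℝ≥0∞)) (f^[k + j] x)
      rw [hx]
      by_cases hm : f^[k] (f^[j] x) ∈ A
      · rw [Set.indicator_of_mem hm, Set.indicator_of_mem (Set.mem_preimage.mpr hm)]
      · rw [Set.indicator_of_notMem hm,
          Set.indicator_of_notMem (fun hc => hm (Set.mem_preimage.mp hc))]
    calc (∑ j ∈ Finset.range n, ((f^[k]) ⁻¹' A).indicator (fun _ => (1:ℝ≥0∞)) (f^[j] x))
        = ∑ j ∈ Finset.range n, h (k+j) := Finset.sum_congr rfl (fun j _ => e1 j)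
      _ = ∑ i ∈ Finset.Ico k (k+n), h i := by
          rw [Finset.sum_Ico_eq_sum_range]
          simp
      _ ≤ ∑ i ∈ Finset.range (k+n), h i := by
          refine Finset.sum_le_sum_of_subset ?_
          intro i hi
          simp only [Finset.mem_Ico] at hi
          simp only [Finset.mem_range]
          exact hi.2
      _ = (∑ j ∈ Finset.range n, h j) + ∑ i ∈ Finset.Ico n (k+n), h i := by
          rw [Finset.range_eq_Ico, Finset.range_eq_Ico]
          exact (Finset.sum_Ico_consecutive h (Nat.zero_le n) (show n ≤ k + n by omega)).symm
      _ ≤ (∑ j ∈ Finset.range n, h j) + k := by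
          refine add_le_add le_rfl ?_
          calc ∑ i ∈ Finset.Ico n (k+n), h i ≤ ∑ _i ∈ Finset.Ico n (k+n), (1:ℝ≥0∞) :=
                Finset.sum_le_sum fun i _ => hb i
            _ = k := by simp [Nat.Ico_eq_range', mul_comm]
  refine le_trans (Filter.limsup_le_limsup (f := atTop)
      (v := fun n : ℕ => (∑ j ∈ Finset.range n, h j) / (n:ℝ≥0∞) + (k:ℝ≥0∞) / (n:ℝ≥0∞))
      (Filter.Eventually.of_forall fun n => ?_)) ?_
  · calc (∑ j ∈ Finset.range n,
        ((f^[k]) ⁻¹' A).indicator (fun _ => (1:ℝ≥0∞)) (f^[j] x)) / (n:ℝ≥0∞)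
        ≤ ((∑ j ∈ Finset.range n, h j) + k) / (n:ℝ≥0∞) := ENNReal.div_le_div (hnum n) le_rfl
      _ = (∑ j ∈ Finset.range n, h j) / (n:ℝ≥0∞) + (k:ℝ≥0∞) / (n:ℝ≥0∞) := ENNReal.add_div
  · refine le_trans (my_limsup_add_le _ _) ?_
    rw [my_limsup_const_div _ (by simp), add_zero]
    exact le_rfl

/-- Finite subadditivity: if a set is covered by finitely many sets, its frequency is at
most the sum of theirs. -/
lemma tauOrbit_le_finsetSum {X : Type*} (f : X → X) (x : X) {K : Set X} {I : ℕ → Set X}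
    {s : Finset ℕ} (hcov : K ⊆ ⋃ i ∈ s, I i) :
    tauOrbit f x K ≤ ∑ i ∈ s, tauOrbit f x (I i) := by
  have hpt : ∀ y, K.indicator (fun _ => (1:ℝ≥0∞)) y
      ≤ ∑ i ∈ s, (I i).indicator (fun _ => (1:ℝ≥0∞)) y := by
    intro y
    by_cases hy : y ∈ K
    · obtain ⟨i, hi, hyi⟩ : ∃ i ∈ s, y ∈ I i := by simpa using hcov hy
      calc K.indicator (fun _ => (1:ℝ≥0∞)) y = 1 := Set.indicator_of_mem hy _
        _ = (I i).indicator (fun _ => (1:ℝ≥0∞)) y := (Set.indicator_of_mem hyi fun _ => (1:ℝ≥0∞)).symm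
        _ ≤ ∑ i ∈ s, (I i).indicator (fun _ => (1:ℝ≥0∞)) y :=
            Finset.single_le_sum (f := fun i => (I i).indicator (fun _ => (1:ℝ≥0∞)) y)
              (fun i _ => zero_le) hi
    · simp [Set.indicator_of_notMem hy]
  refine le_trans (Filter.limsup_le_limsup (f := atTop)
      (v := fun n : ℕ => ∑ i ∈ s, (∑ j ∈ Finset.range n,
        (I i).indicator (fun _ => (1:ℝ≥0∞)) (f^[j] x)) / (n:ℝ≥0∞))
      (Filter.Eventually.of_forall fun n => ?_)) (my_limsup_sum_le s _)
  calc (∑ j ∈ Finset.range n, K.indicator (fun _ => (1:ℝ≥0∞)) (f^[j] x)) / (n:ℝ≥0∞)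
      ≤ (∑ j ∈ Finset.range n, ∑ i ∈ s,
          (I i).indicator (fun _ => (1:ℝ≥0∞)) (f^[j] x)) / (n:ℝ≥0∞) :=
        ENNReal.div_le_div (Finset.sum_le_sum fun j _ => hpt _) le_rfl
    _ = ∑ i ∈ s, (∑ j ∈ Finset.range n,
          (I i).indicator (fun _ => (1:ℝ≥0∞)) (f^[j] x)) / (n:ℝ≥0∞) := by
        rw [Finset.sum_comm]
        simp only [div_eq_mul_inv, Finset.sum_mul]

/-- Let `𝕏` be a perfect compact metric space and `f : 𝕏 → 𝕏` continuous. If for some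
`x ∈ 𝕏` the measure `η_x` is purely atomic with finitely many atoms (there is a finite set
`F` of atoms with `η_x(𝕏 ∖ F) = 0`), then every atom `P` of `η_x` is preperiodic for `f`;
if moreover `f` is a bijection, then every atom of `η_x` is periodic for `f`. -/
theorem atoms_preperiodic
    {X : Type*} [MetricSpace X] [CompactSpace X] [MeasurableSpace X] [BorelSpace X]
    (hperf : Perfect (Set.univ : Set X))
    (f : X → X) (hf : Continuous f) (x : X)
    (η : X → Measure X) (hη : ∀ y : X, ∀ E : Set X, MeasurableSet E → η y E = nuFun f y E)
    (hatomic : ∃ F : Finset X, (∀ P ∈ F, 0 < η x {P}) ∧ η x (Set.univ \ (F : Set X)) = 0) :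
    (∀ P : X, 0 < η x {P} → ∃ m n : ℕ, n < m ∧ f^[m] P = f^[n] P) ∧
      (Function.Bijective f →
        ∀ P : X, 0 < η x {P} → ∃ k : ℕ, 1 ≤ k ∧ f^[k] P = P) := by
  obtain ⟨F, hFatoms, hnull⟩ := hatomic
  -- Step A: an atom forces positive frequency in every ball around it.
  have keyA : ∀ (P : X) (ε : ℝ), 0 < ε → η x {P} ≤ tauOrbit f x (Metric.ball P ε) := by
    intro P ε hε
    rw [hη x {P} (isClosed_singleton.measurableSet), nuFun]
    refine iSup_le fun r => iSup_le fun hr => ?_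
    set s : ℝ := min ε (r/2) with hs_def
    have hs : 0 < s := lt_min hε (by positivity)
    set I : ℕ → Set X := fun n => if n = 0 then Metric.ball P s else ∅ with hI
    have hcov : ({P} : Set X) ⊆ ⋃ n, I n := by
      intro y hy
      rw [Set.mem_singleton_iff] at hy
      subst hy
      exact Set.mem_iUnion.mpr ⟨0, by simp [hI, Metric.mem_ball_self hs]⟩
    have hopen : ∀ n, IsOpen (I n) := by
      intro n; by_cases h : n = 0 <;> simp [hI, h, Metric.isOpen_ball]
    have hdiam : ∀ n, EMetric.diam (I n) ≤ ENNReal.ofReal r := by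
      intro n; by_cases h : n = 0
      · simp only [hI, h, if_pos]
        rw [← Metric.emetric_ball]
        calc EMetric.diam (EMetric.ball P (ENNReal.ofReal s)) ≤ 2 * ENNReal.ofReal s :=
              EMetric.diam_ball
          _ ≤ ENNReal.ofReal r := by
              have h2 : (2:ℝ≥0∞) = ENNReal.ofReal 2 := by
                simp [ENNReal.ofReal_ofNat]
              rw [h2, ← ENNReal.ofReal_mul (by norm_num)]
              refine ENNReal.ofReal_le_ofReal ?_
              have : s ≤ r/2 := min_le_right _ _
              linarith
      · simp [hI, h, EMetric.diam]
    calc nuAux f x r {P} ≤ ∑' n, tauOrbit f x (I n) :=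
          iInf_le_of_le I (iInf_le_of_le hcov (iInf_le_of_le hopen (iInf_le_of_le hdiam le_rfl)))
      _ = tauOrbit f x (I 0) := by
          refine tsum_eq_single 0 fun n hn => ?_
          simp [hI, hn, tauOrbit_empty]
      _ ≤ tauOrbit f x (Metric.ball P ε) := by
          simp only [hI, if_pos rfl]
          exact tauOrbit_mono f x (Metric.ball_subset_ball (min_le_left _ _))
  -- Step B: the frequency of a ball bounds the measure of the closed ball from below.
  have keyB : ∀ (Q : X) (ε : ℝ),
      tauOrbit f x (Metric.ball Q ε) ≤ η x (Metric.closedBall Q ε) := by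
    intro Q ε
    rw [hη x _ Metric.isClosed_closedBall.measurableSet, nuFun]
    refine le_iSup_of_le (1:ℝ) (le_iSup_of_le one_pos ?_)
    refine le_iInf fun I => le_iInf fun hcov => le_iInf fun hopen => le_iInf fun _ => ?_
    have hK : IsCompact (Metric.closedBall Q ε) := Metric.isClosed_closedBall.isCompact
    obtain ⟨t, ht⟩ := hK.elim_finite_subcover I hopen hcov
    calc tauOrbit f x (Metric.ball Q ε) ≤ tauOrbit f x (Metric.closedBall Q ε) :=
          tauOrbit_mono f x Metric.ball_subset_closedBall
      _ ≤ ∑ i ∈ t, tauOrbit f x (I i) := tauOrbit_le_finsetSum f x ht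
      _ ≤ ∑' n, tauOrbit f x (I n) := ENNReal.sum_le_tsum t
  -- Step C: all iterates of an atom lie in `F`.
  have hmem : ∀ P : X, 0 < η x {P} → ∀ j : ℕ, f^[j] P ∈ F := by
    intro P hP j
    by_contra hQ
    set Q := f^[j] P with hQdef
    have hclosed : IsClosed (F : Set X) := F.finite_toSet.isClosed
    have hnhds : ((F : Set X))ᶜ ∈ 𝓝 Q := hclosed.isOpen_compl.mem_nhds (by simpa using hQ)
    obtain ⟨ε, hε, hball⟩ := Metric.mem_nhds_iff.mp hnhds
    have hcont : Continuous (f^[j]) := hf.iterate j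
    have hpre : IsOpen ((f^[j]) ⁻¹' Metric.ball Q (ε/2)) :=
      hcont.isOpen_preimage _ Metric.isOpen_ball
    have hPmem : P ∈ (f^[j]) ⁻¹' Metric.ball Q (ε/2) := by
      simp only [Set.mem_preimage, ← hQdef]
      exact Metric.mem_ball_self (by positivity)
    obtain ⟨δ, hδ, hδsub⟩ := Metric.isOpen_iff.mp hpre P hPmem
    have chain : η x {P} ≤ η x (Metric.closedBall Q (ε/2)) :=
      calc η x {P} ≤ tauOrbit f x (Metric.ball P δ) := keyA P δ hδ
        _ ≤ tauOrbit f x ((f^[j]) ⁻¹' Metric.ball Q (ε/2)) := tauOrbit_mono f x hδsub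
        _ ≤ tauOrbit f x (Metric.ball Q (ε/2)) := tauOrbit_preimage_le f x _ j
        _ ≤ η x (Metric.closedBall Q (ε/2)) := keyB Q (ε/2)
    have hsub : Metric.closedBall Q (ε/2) ⊆ Set.univ \ (F : Set X) := by
      intro y hy
      refine ⟨trivial, ?_⟩
      have : y ∈ Metric.ball Q ε := Metric.closedBall_subset_ball (by linarith) hy
      exact hball this
    have : η x (Metric.closedBall Q (ε/2)) ≤ 0 := hnull ▸ measure_mono hsub
    exact absurd (lt_of_lt_of_le hP (le_trans chain this)) (lt_irrefl 0)
  -- Pigeonhole: preperiodicity.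
  have hpre : ∀ P : X, 0 < η x {P} → ∃ m n : ℕ, n < m ∧ f^[m] P = f^[n] P := by
    intro P hP
    have h := hmem P hP
    obtain ⟨i, j, hij, heq⟩ :=
      Finite.exists_ne_map_eq_of_infinite (fun n : ℕ => (⟨f^[n] P, h n⟩ : (F : Set X)))
    have heq' : f^[i] P = f^[j] P := congrArg Subtype.val heq
    rcases hij.lt_or_gt with h' | h'
    · exact ⟨j, i, h', heq'.symm⟩
    · exact ⟨i, j, h', heq'⟩
  refine ⟨hpre, fun hbij P hP => ?_⟩
  obtain ⟨m, n, hmn, heq⟩ := hpre P hP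
  refine ⟨m - n, by omega, ?_⟩
  have hinj : Function.Injective (f^[n]) := Function.Injective.iterate hbij.injective n
  apply hinj
  rw [← Function.iterate_add_apply]
  have hmn' : n + (m - n) = m := by omega
  rw [hmn', heq]
end
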